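/- arXiv:2310.15953 — 4 statements merged into one kernel-verified Lean document; each statement's English description precedes it below -/
import Mathlib

section
/- Let Γ be a RAACH with defining graph (H,m) and s₀ ∈ R_∞. Define a new defining graph (H',m') with vertex set S' = (S ∖ {s₀}) ∪ {s', s''} (s', s'' fresh symbols), with m' = m on S ∖ {s₀} and m'(s') = m'(s'') = 2, whose edges are: all edges {s,t} of H with s,t ≠ s₀, and the pairs {s',t} and {s'',t} for every edge {s₀,t} of H (in particular there is no edge {s',s''}). Let Γ' be the RAACH with defining graph (H',m'). Then the associated pairs (H*,w) of Γ and ((H')*,w') of Γ' are isomorphic as edge-weighted graphs, and the Cayley graphs Cay(Γ,S) and Cay(Γ',S') are isomorphic as simple graphs. -/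
set_option linter.unusedVariables false

attribute [local instance] Classical.propDecidable

open scoped commutatorElement

/-- The Cayley graph of a group `G` with respect to a connecting set `T`
(assumed closed under inversion, e.g. a symmetrized generating set). -/
def cayley (G : Type*) [Group G] (T : Set G) : SimpleGraph G where
  Adj x y := x ≠ y ∧ (x⁻¹ * y ∈ T ∨ y⁻¹ * x ∈ T)
  symm := ⟨fun x y h => ⟨h.1.symm, h.2.symm⟩⟩
  loopless := ⟨fun x h => h.1 rfl⟩

/-- The defining relators of a Right Angled Artin-Coxeter Hybrid: `s ^ (m s) = 1` for every
generator `s` with finite order prescription `m s`, and commutators for edges of `H`. -/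
def raachRels {S : Type*} (H : SimpleGraph S) (m : S → ℕ∞) : Set (FreeGroup S) :=
  {r | ∃ (s : S) (k : ℕ), m s = (k : ℕ∞) ∧ r = FreeGroup.of s ^ k} ∪
  {r | ∃ s t : S, H.Adj s t ∧ r = ⁅FreeGroup.of s, FreeGroup.of t⁆}

/-- The Right Angled Artin-Coxeter Hybrid with defining graph `(H, m)`. -/
abbrev RAACH {S : Type*} (H : SimpleGraph S) (m : S → ℕ∞) : Type _ :=
  PresentedGroup (raachRels H m)

/-- The generator of a RAACH corresponding to `s : S`. -/
def raachGen {S : Type*} (H : SimpleGraph S) (m : S → ℕ∞) (s : S) : RAACH H m :=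
  PresentedGroup.of s

/-- The symmetrized generating set `S* = {s, s⁻¹ | s ∈ S}` inside the RAACH. -/
def Sstar {S : Type*} (H : SimpleGraph S) (m : S → ℕ∞) : Set (RAACH H m) :=
  {g | ∃ s : S, g = raachGen H m s ∨ g = (raachGen H m s)⁻¹}

/-- The Cayley graph `Cay(Γ, S)` of the RAACH `Γ` with defining graph `(H, m)`. -/
def cayRAACH {S : Type*} (H : SimpleGraph S) (m : S → ℕ∞) : SimpleGraph (RAACH H m) :=
  cayley (RAACH H m) (Sstar H m)

/-- The edge weight function of the associated pair `(H*, w)` of a RAACH: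
`w(s,t) = 1` if `s`, `t` commute and `t ∉ {s, s⁻¹}`; `w(s, s⁻¹) = 1` if `ord(s) = 4`;
`w(s, s⁻¹) = 2` if `ord(s) = 3`; and `w(s,t) = 0` otherwise. -/
noncomputable def apWeight {S : Type*} (H : SimpleGraph S) (m : S → ℕ∞)
    (s t : RAACH H m) : ℕ :=
  if Commute s t ∧ t ≠ s ∧ t ≠ s⁻¹ then 1
  else if t = s⁻¹ ∧ orderOf s = 4 then 1
  else if t = s⁻¹ ∧ orderOf s = 3 then 2
  else 0

/-- The vertex set of the new defining graph: `S \ {s₀}` together with two fresh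
symbols `s'`, `s''` (encoded by `Bool`). -/
def newVerts (S : Type*) (s₀ : S) : Type _ := {a : S // a ≠ s₀} ⊕ Bool

/-- The relation generating the edges of the new defining graph `H'`: old edges not meeting
`s₀`; every edge `{s₀, t}` of `H` gives the pairs `{s', t}`, `{s'', t}`; and (if `withEdge`)
the additional edge `{s', s''}`. -/
def newRel {S : Type*} (H : SimpleGraph S) (s₀ : S) (withEdge : Bool) :
    newVerts S s₀ → newVerts S s₀ → Prop
  | Sum.inl a, Sum.inl b => H.Adj a.1 b.1
  | Sum.inl _, Sum.inr _ => False
  | Sum.inr _, Sum.inl b => H.Adj s₀ b.1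
  | Sum.inr _, Sum.inr _ => withEdge = true

/-- The new defining graph `H'`. -/
def newGraph {S : Type*} (H : SimpleGraph S) (s₀ : S) (withEdge : Bool) :
    SimpleGraph (newVerts S s₀) :=
  SimpleGraph.fromRel (newRel H s₀ withEdge)

/-- The new order function `m'`: equal to `m` away from `s₀`, and `m'(s') = m'(s'') = 2`. -/
def newM {S : Type*} (m : S → ℕ∞) (s₀ : S) : newVerts S s₀ → ℕ∞ :=
  Sum.elim (fun a => m a.1) (fun _ => 2)

namespace RaachProof

open PresentedGroup Multiplicative

variable {S : Type} {H : SimpleGraph S} {m : S → ℕ∞}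

theorem rel_one {r : FreeGroup S} (hr : r ∈ raachRels H m) :
    PresentedGroup.mk (raachRels H m) r = 1 :=
  (QuotientGroup.eq_one_iff r).2 (Subgroup.subset_normalClosure hr)

theorem gen_pow_eq_one {s : S} {k : ℕ} (h : m s = (k : ℕ∞)) :
    raachGen H m s ^ k = 1 := by
  have h1 : raachGen H m s ^ k = PresentedGroup.mk (raachRels H m) (FreeGroup.of s ^ k) := by
    rw [map_pow]; rfl
  rw [h1]
  exact rel_one (Or.inl ⟨s, k, h, rfl⟩)

theorem commute_of_adj {s t : S} (h : H.Adj s t) :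
    Commute (raachGen H m s) (raachGen H m t) := by
  rw [← commutatorElement_eq_one_iff_commute]
  have h1 : ⁅raachGen H m s, raachGen H m t⁆ =
      PresentedGroup.mk (raachRels H m) ⁅FreeGroup.of s, FreeGroup.of t⁆ := by
    rw [map_commutatorElement]; rfl
  rw [h1]
  exact rel_one (Or.inr ⟨s, t, h, rfl⟩)

/-- Universal property of a RAACH. -/
noncomputable def lift {G : Type*} [Group G] (f : S → G)
    (hpow : ∀ (s : S) (k : ℕ), m s = (k : ℕ∞) → f s ^ k = 1)
    (hcomm : ∀ s t, H.Adj s t → Commute (f s) (f t)) : RAACH H m →* G :=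
  PresentedGroup.toGroup (f := f) (by
    rintro r (⟨s, k, hk, rfl⟩ | ⟨s, t, h, rfl⟩)
    · rw [map_pow, FreeGroup.lift_apply_of]; exact hpow s k hk
    · rw [map_commutatorElement, FreeGroup.lift_apply_of, FreeGroup.lift_apply_of]
      exact commutatorElement_eq_one_iff_commute.mpr (hcomm s t h))

@[simp] theorem lift_gen {G : Type*} [Group G] (f : S → G)
    (hpow : ∀ (s : S) (k : ℕ), m s = (k : ℕ∞) → f s ^ k = 1)
    (hcomm : ∀ s t, H.Adj s t → Commute (f s) (f t)) (s : S) :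
    lift f hpow hcomm (raachGen H m s) = f s :=
  PresentedGroup.toGroup.of _

theorem gen_induction (P : RAACH H m → Prop) (h1 : P 1)
    (hof : ∀ s, P (raachGen H m s)) (hinv : ∀ x, P x → P x⁻¹)
    (hmul : ∀ x y, P x → P y → P (x * y)) : ∀ g, P g := by
  intro g
  induction g using PresentedGroup.induction_on with
  | _ z =>
    induction z using FreeGroup.induction_on with
    | C1 => rw [map_one]; exact h1
    | of x => exact hof x
    | inv_of x hx => rw [map_inv]; exact hinv _ hx
    | mul x y hx hy => rw [map_mul]; exact hmul _ _ hx hy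

theorem hom_eq {G : Type*} [Group G] {φ ψ : RAACH H m →* G}
    (h : ∀ s, φ (raachGen H m s) = ψ (raachGen H m s)) (g : RAACH H m) : φ g = ψ g := by
  refine gen_induction (fun g => φ g = ψ g) (by simp) h ?_ ?_ g
  · intro x hx; rw [map_inv, map_inv, hx]
  · intro x y hx hy; rw [map_mul, map_mul, hx, hy]

/-- The character detecting the generator `s`. -/
noncomputable def chi (s : S) : RAACH H m →* Multiplicative (ZMod (m s).toNat) :=
  lift (fun t => if t = s then ofAdd 1 else 1)
    (by
      intro t k hk
      by_cases ht : t = s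
      · subst ht
        have hn : (m t).toNat = k := by rw [hk]; exact ENat.toNat_coe k
        rw [if_pos rfl, ← ofAdd_nsmul]
        subst hn
        rw [nsmul_eq_mul, mul_one, ZMod.natCast_self]
        rfl
      · rw [if_neg ht, one_pow])
    (fun _ _ _ => Commute.all _ _)

theorem chi_gen_self (s : S) : chi (H := H) (m := m) s (raachGen H m s) = ofAdd 1 := by
  rw [chi, lift_gen, if_pos rfl]

theorem chi_gen_ne {s t : S} (h : t ≠ s) : chi (H := H) (m := m) s (raachGen H m t) = 1 := by
  rw [chi, lift_gen, if_neg h]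

theorem one_ne_zero_zmod {n : ℕ} (h : n ≠ 1) : (1 : ZMod n) ≠ 0 := by
  match n, h with
  | 0, _ => exact one_ne_zero
  | (k + 2), _ =>
    haveI : Fact (1 < k + 2) := ⟨by omega⟩
    exact one_ne_zero

theorem orderOf_gen (s : S) : orderOf (raachGen H m s) = (m s).toNat := by
  have h1 : orderOf (chi (H := H) (m := m) s (raachGen H m s)) ∣ orderOf (raachGen H m s) :=
    orderOf_map_dvd _ _
  rw [chi_gen_self] at h1
  have h2 : orderOf (ofAdd (1 : ZMod (m s).toNat)) = (m s).toNat := by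
    rw [orderOf_ofAdd_eq_addOrderOf, ZMod.addOrderOf_one]
  rw [h2] at h1
  refine Nat.dvd_antisymm ?_ h1
  cases hms : m s with
  | top => simp
  | coe k =>
    rw [ENat.toNat_coe]
    exact orderOf_dvd_of_pow_eq_one (gen_pow_eq_one hms)

theorem toNat_ne_one {s : S} (h : m s ≠ 1) : (m s).toNat ≠ 1 := by
  intro e1
  cases hms : m s with
  | top => rw [hms] at e1; simp [ENat.toNat_top] at e1
  | coe k =>
    rw [hms] at e1
    rw [ENat.toNat_coe] at e1
    subst e1
    exact h (by rw [hms]; rfl)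

theorem gen_ne_one {s : S} (h : m s ≠ 1) : raachGen H m s ≠ 1 := by
  intro e
  have := chi_gen_self (H := H) (m := m) s
  rw [e, map_one] at this
  have h1 : ((1 : ZMod (m s).toNat)) = 0 := by
    have := congrArg toAdd this.symm
    simpa using this
  exact one_ne_zero_zmod (toNat_ne_one h) h1

theorem gen_ne_gen {s t : S} (hst : s ≠ t) (h : m t ≠ 1) :
    raachGen H m s ≠ raachGen H m t := by
  intro e
  have h1 := chi_gen_ne (H := H) (m := m) (s := t) hst
  rw [e, chi_gen_self] at h1
  have h2 : ((1 : ZMod (m t).toNat)) = 0 := by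
    have := congrArg toAdd h1
    simpa using this
  exact one_ne_zero_zmod (toNat_ne_one h) h2

theorem gen_ne_inv_gen {s t : S} (hst : s ≠ t) (h : m t ≠ 1) :
    raachGen H m s ≠ (raachGen H m t)⁻¹ := by
  intro e
  have h1 := chi_gen_ne (H := H) (m := m) (s := t) hst
  rw [e, map_inv, chi_gen_self] at h1
  have h2 : ((1 : ZMod (m t).toNat)) = 0 := by
    have := congrArg toAdd h1
    simp only [toAdd_inv, toAdd_ofAdd, toAdd_one] at this
    exact neg_eq_zero.mp (by rw [this])
  exact one_ne_zero_zmod (toNat_ne_one h) h2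

def p2a : Equiv.Perm (Fin 4) := @Equiv.swap (Fin 4) (instDecidableEqFin 4) 0 1
def p2b : Equiv.Perm (Fin 4) := @Equiv.swap (Fin 4) (instDecidableEqFin 4) 1 2
def p3a : Equiv.Perm (Fin 4) := p2a * p2b
def p3b : Equiv.Perm (Fin 4) := p2b * @Equiv.swap (Fin 4) (instDecidableEqFin 4) 2 3

/-- A computable decidable-equality instance for permutations of `Fin 4`. -/
def pdec : DecidableEq (Equiv.Perm (Fin 4)) := Fintype.decidableEqEquivFintype

theorem p2a_pow2 : p2a ^ 2 = 1 := @of_decide_eq_true _ (pdec _ _) rfl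
theorem p2b_pow2 : p2b ^ 2 = 1 := @of_decide_eq_true _ (pdec _ _) rfl
theorem p3a_pow3 : p3a ^ 3 = 1 := @of_decide_eq_true _ (pdec _ _) rfl
theorem p3b_pow3 : p3b ^ 3 = 1 := @of_decide_eq_true _ (pdec _ _) rfl
theorem p2a_pow4 : p2a ^ 4 = 1 := @of_decide_eq_true _ (pdec _ _) rfl
theorem p2b_pow4 : p2b ^ 4 = 1 := @of_decide_eq_true _ (pdec _ _) rfl
theorem nc_aa : ¬ (p2a * p2b = p2b * p2a) := @of_decide_eq_false _ (pdec _ _) rfl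
theorem nc_ab : ¬ (p2a * p3b = p3b * p2a) := @of_decide_eq_false _ (pdec _ _) rfl
theorem nc_ba : ¬ (p3a * p2b = p2b * p3a) := @of_decide_eq_false _ (pdec _ _) rfl
theorem nc_bb : ¬ (p3a * p3b = p3b * p3a) := @of_decide_eq_false _ (pdec _ _) rfl

theorem enat_22 : (2:ℕ∞) ≠ 3 := by exact_mod_cast (by norm_num : (2:ℕ) ≠ 3)
theorem enat_44 : (4:ℕ∞) ≠ 3 := by exact_mod_cast (by norm_num : (4:ℕ) ≠ 3)

theorem commute_gen_iff (hm : ∀ u, m u = 2 ∨ m u = 3 ∨ m u = 4 ∨ m u = (⊤ : ℕ∞)) (s t : S) :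
    Commute (raachGen H m s) (raachGen H m t) ↔ (s = t ∨ H.Adj s t) := by
  constructor
  · intro hc
    by_contra hn
    push_neg at hn
    obtain ⟨hne, hnadj⟩ := hn
    set a : Equiv.Perm (Fin 4) := if m s = 3 then p3a else p2a with ha
    set b : Equiv.Perm (Fin 4) := if m t = 3 then p3b else p2b with hb
    have hpow : ∀ (u : S) (k : ℕ), m u = (k : ℕ∞) →
        (if u = s then a else if u = t then b else 1) ^ k = 1 := by
      intro u k hk
      by_cases hus : u = s
      · subst hus
        rw [if_pos rfl]
        rcases hm u with h2 | h3 | h4 | htop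
        · have hk2 : (k : ℕ∞) = 2 := by rw [← hk, h2]
          have : k = 2 := by exact_mod_cast hk2
          subst this
          rw [ha, if_neg (by rw [h2]; exact enat_22)]
          exact p2a_pow2
        · have hk2 : (k : ℕ∞) = 3 := by rw [← hk, h3]
          have : k = 3 := by exact_mod_cast hk2
          subst this
          rw [ha, if_pos h3]
          exact p3a_pow3
        · have hk2 : (k : ℕ∞) = 4 := by rw [← hk, h4]
          have : k = 4 := by exact_mod_cast hk2
          subst this
          rw [ha, if_neg (by rw [h4]; exact enat_44)]
          exact p2a_pow4
        · rw [htop] at hk; exact absurd hk.symm (by simp)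
      · rw [if_neg hus]
        by_cases hut : u = t
        · subst hut
          rw [if_pos rfl]
          rcases hm u with h2 | h3 | h4 | htop
          · have hk2 : (k : ℕ∞) = 2 := by rw [← hk, h2]
            have : k = 2 := by exact_mod_cast hk2
            subst this
            rw [hb, if_neg (by rw [h2]; exact enat_22)]
            exact p2b_pow2
          · have hk2 : (k : ℕ∞) = 3 := by rw [← hk, h3]
            have : k = 3 := by exact_mod_cast hk2
            subst this
            rw [hb, if_pos h3]
            exact p3b_pow3
          · have hk2 : (k : ℕ∞) = 4 := by rw [← hk, h4]
            have : k = 4 := by exact_mod_cast hk2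
            subst this
            rw [hb, if_neg (by rw [h4]; exact enat_44)]
            exact p2b_pow4
          · rw [htop] at hk; exact absurd hk.symm (by simp)
        · rw [if_neg hut, one_pow]
    have hcomm : ∀ u v, H.Adj u v →
        Commute (if u = s then a else if u = t then b else 1)
          (if v = s then a else if v = t then b else 1) := by
      intro u v hadj
      by_cases hus : u = s
      · subst hus
        by_cases hvs : v = u
        · exact absurd (hvs ▸ hadj) (H.loopless.irrefl u)
        · by_cases hvt : v = t
          · subst hvt; exact absurd hadj hnadj
          · rw [if_neg (fun h => hvs h), if_neg hvt]
            exact Commute.one_right _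
      · by_cases hut : u = t
        · subst hut
          by_cases hvs : v = s
          · subst hvs; exact absurd hadj.symm hnadj
          · by_cases hvt : v = u
            · exact absurd (hvt ▸ hadj) (H.loopless.irrefl u)
            · rw [if_neg hvs, if_neg (fun h => hvt h)]
              exact Commute.one_right _
        · rw [if_neg hus, if_neg hut]
          exact Commute.one_left _
    have hC := hc.map (lift _ hpow hcomm)
    rw [lift_gen, lift_gen] at hC
    rw [if_pos rfl, if_neg (fun h => hne h.symm), if_pos rfl] at hC
    rw [ha, hb] at hC
    split_ifs at hC
    · exact nc_bb hC
    · exact nc_ba hC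
    · exact nc_ab hC
    · exact nc_aa hC
  · rintro (rfl | hadj)
    · exact Commute.refl _
    · exact commute_of_adj hadj

/-- `gsgn true g = g`, `gsgn false g = g⁻¹`. -/
def gsgn {G : Type*} [Group G] (b : Bool) (g : G) : G := if b then g else g⁻¹

theorem commute_gsgn {G : Type*} [Group G] (a b : Bool) (x y : G) :
    Commute (gsgn a x) (gsgn b y) ↔ Commute x y := by
  cases a <;> cases b <;>
    simp [gsgn, Commute.inv_left_iff, Commute.inv_right_iff]

theorem gen_eq_inv_iff (s : S) :
    raachGen H m s = (raachGen H m s)⁻¹ ↔ (m s).toNat ∣ 2 := by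
  rw [eq_inv_iff_mul_eq_one, ← pow_two, ← orderOf_dvd_iff_pow_eq_one, orderOf_gen]

/-! ### ZMod 2 helpers -/

theorem zmod2_eq_one {z : ZMod 2} (h : z ≠ 0) : z = 1 := by
  have hv : z.val < 2 := ZMod.val_lt z
  have hz : ((z.val : ℕ) : ZMod 2) = z := by rw [ZMod.natCast_val, ZMod.cast_id]
  interval_cases hval : z.val
  · exact absurd (by rw [← hz]; exact Nat.cast_zero) h
  · rw [← hz]; exact Nat.cast_one

theorem zmod2_one_add_one : (1 : ZMod 2) + 1 = 0 := by
  have h : ((2 : ℕ) : ZMod 2) = 0 := ZMod.natCast_self 2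
  rw [Nat.cast_ofNat] at h
  rw [one_add_one_eq_two, h]

theorem zmod2_add_one_iff (z : ZMod 2) : z + 1 = 0 ↔ ¬ z = 0 := by
  constructor
  · intro h h0
    rw [h0, zero_add] at h
    exact one_ne_zero h
  · intro h
    rw [zmod2_eq_one h, zmod2_one_add_one]

theorem zmod2_neg_one : ((-1 : ℤ) : ZMod 2) = 1 := by
  rw [Int.cast_neg, Int.cast_one]
  rw [neg_eq_iff_add_eq_zero, zmod2_one_add_one]

/-! ### The two groups and the comparison machinery -/

section TwoGroups

variable (H : SimpleGraph S) (m : S → ℕ∞) (s₀ : S)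

theorem adj_inl_inl (w : Bool) (a b : {a : S // a ≠ s₀}) :
    (newGraph H s₀ w).Adj (Sum.inl a) (Sum.inl b) ↔ H.Adj a.1 b.1 := by
  refine (SimpleGraph.fromRel_adj (newRel H s₀ w) (Sum.inl a) (Sum.inl b)).trans ?_
  constructor
  · rintro ⟨hne, h | h⟩
    · exact h
    · exact h.symm
  · intro h
    refine ⟨?_, Or.inl h⟩
    intro e
    injection e with e'
    exact h.ne (congrArg Subtype.val e')

theorem adj_inl_inr (w : Bool) (a : {a : S // a ≠ s₀}) (b : Bool) :
    (newGraph H s₀ w).Adj (Sum.inl a) (Sum.inr b) ↔ H.Adj s₀ a.1 := by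
  refine (SimpleGraph.fromRel_adj (newRel H s₀ w) (Sum.inl a) (Sum.inr b)).trans ?_
  constructor
  · rintro ⟨hne, h | h⟩
    · exact h.elim
    · exact h
  · intro h
    exact ⟨Sum.inl_ne_inr, Or.inr h⟩

theorem adj_inr_inl (w : Bool) (b : Bool) (a : {a : S // a ≠ s₀}) :
    (newGraph H s₀ w).Adj (Sum.inr b) (Sum.inl a) ↔ H.Adj s₀ a.1 := by
  refine ((newGraph H s₀ w).adj_comm _ _).trans ?_
  exact adj_inl_inr H s₀ w a b

theorem adj_inr_inr (a b : Bool) :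
    ¬ (newGraph H s₀ false).Adj (Sum.inr a) (Sum.inr b) := by
  rw [show (newGraph H s₀ false).Adj (Sum.inr a) (Sum.inr b) ↔ _ from
    SimpleGraph.fromRel_adj (newRel H s₀ false) (Sum.inr a) (Sum.inr b)]
  rintro ⟨hne, h | h⟩ <;> exact Bool.false_ne_true h

theorem newM_inl (a : {a : S // a ≠ s₀}) : newM m s₀ (Sum.inl a) = m a.1 := rfl

theorem newM_inr (b : Bool) : newM m s₀ (Sum.inr b) = ((2 : ℕ) : ℕ∞) := by
  simp [newM]

theorem hm_new (hm : ∀ s, m s = 2 ∨ m s = 3 ∨ m s = 4 ∨ m s = (⊤ : ℕ∞)) :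
    ∀ v, newM m s₀ v = 2 ∨ newM m s₀ v = 3 ∨ newM m s₀ v = 4 ∨ newM m s₀ v = (⊤ : ℕ∞) := by
  rintro (a | b)
  · exact hm a.1
  · exact Or.inl rfl

variable (hs₀ : m s₀ = (⊤ : ℕ∞))

/-- The mod-2 character of `Γ` counting occurrences of `s₀`. -/
noncomputable def qh : RAACH H m →* Multiplicative (ZMod 2) :=
  lift (fun u => if u = s₀ then ofAdd 1 else 1)
    (by
      intro u k hk
      by_cases hu : u = s₀
      · subst hu; rw [hs₀] at hk; exact absurd hk.symm (by simp)
      · rw [if_neg hu, one_pow])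
    (fun _ _ _ => Commute.all _ _)

/-- The mod-2 character of `Γ'` counting occurrences of `s'` and `s''`. -/
noncomputable def ph : RAACH (newGraph H s₀ false) (newM m s₀) →* Multiplicative (ZMod 2) :=
  lift (Sum.elim (fun _ => 1) (fun _ => ofAdd 1))
    (by
      rintro (a | b) k hk
      · simp
      · have h2 : ((2 : ℕ) : ℕ∞) = (k : ℕ∞) := by rw [← hk, newM_inr]
        have : k = 2 := by exact_mod_cast h2.symm
        subst this
        show ofAdd (1 : ZMod 2) ^ 2 = 1
        rw [← ofAdd_nsmul, nsmul_eq_mul, mul_one, ZMod.natCast_self]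
        rfl)
    (fun _ _ _ => Commute.all _ _)

/-- Abbreviations for the generators. -/
noncomputable def g0 : RAACH H m := raachGen H m s₀

noncomputable def gB (b : Bool) : RAACH (newGraph H s₀ false) (newM m s₀) :=
  raachGen (newGraph H s₀ false) (newM m s₀) (Sum.inr b)

noncomputable def gA (a : {a : S // a ≠ s₀}) : RAACH (newGraph H s₀ false) (newM m s₀) :=
  raachGen (newGraph H s₀ false) (newM m s₀) (Sum.inl a)

theorem gB_sq (b : Bool) : gB H m s₀ b * gB H m s₀ b = 1 := by
  have := gen_pow_eq_one (H := newGraph H s₀ false) (m := newM m s₀)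
    (s := Sum.inr b) (k := 2) (newM_inr m s₀ b)
  rwa [pow_two] at this

theorem gB_inv (b : Bool) : (gB H m s₀ b)⁻¹ = gB H m s₀ b :=
  inv_eq_of_mul_eq_one_right (gB_sq H m s₀ b)

theorem ph_gB (b : Bool) : ph H m s₀ (gB H m s₀ b) = ofAdd 1 := by
  erw [gB, ph, lift_gen]

theorem ph_gA (a : {a : S // a ≠ s₀}) : ph H m s₀ (gA H m s₀ a) = 1 := by
  erw [gA, ph, lift_gen]; rfl

theorem qh_g0 : qh H m s₀ hs₀ (g0 H m s₀) = ofAdd 1 := by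
  rw [g0, qh, lift_gen, if_pos rfl]

theorem qh_gen_ne {u : S} (hu : u ≠ s₀) : qh H m s₀ hs₀ (raachGen H m u) = 1 := by
  rw [qh, lift_gen, if_neg hu]

/-- The shift permutation of `Γ'` along the `D∞`-lines. -/
noncomputable def sigma : Equiv.Perm (RAACH (newGraph H s₀ false) (newM m s₀)) where
  toFun x := x * (if toAdd (ph H m s₀ x) = 0 then gB H m s₀ true else gB H m s₀ false)
  invFun x := x * (if toAdd (ph H m s₀ x) = 0 then gB H m s₀ false else gB H m s₀ true)
  left_inv := by
    intro x
    dsimp only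
    by_cases hx : toAdd (ph H m s₀ x) = 0
    · rw [if_pos hx]
      have hx2 : ¬ toAdd (ph H m s₀ (x * gB H m s₀ true)) = 0 := by
        rw [map_mul, ph_gB, toAdd_mul, toAdd_ofAdd, hx, zero_add]
        exact one_ne_zero
      rw [if_neg hx2, mul_assoc, gB_sq, mul_one]
    · rw [if_neg hx]
      have hx2 : toAdd (ph H m s₀ (x * gB H m s₀ false)) = 0 := by
        rw [map_mul, ph_gB, toAdd_mul, toAdd_ofAdd]
        exact (zmod2_add_one_iff _).mpr hx
      rw [if_pos hx2, mul_assoc, gB_sq, mul_one]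
  right_inv := by
    intro x
    dsimp only
    by_cases hx : toAdd (ph H m s₀ x) = 0
    · rw [if_pos hx]
      have hx2 : ¬ toAdd (ph H m s₀ (x * gB H m s₀ false)) = 0 := by
        rw [map_mul, ph_gB, toAdd_mul, toAdd_ofAdd, hx, zero_add]
        exact one_ne_zero
      rw [if_neg hx2, mul_assoc, gB_sq, mul_one]
    · rw [if_neg hx]
      have hx2 : toAdd (ph H m s₀ (x * gB H m s₀ true)) = 0 := by
        rw [map_mul, ph_gB, toAdd_mul, toAdd_ofAdd]
        exact (zmod2_add_one_iff _).mpr hx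
      rw [if_pos hx2, mul_assoc, gB_sq, mul_one]

theorem sigma_apply (x) :
    sigma H m s₀ x = x * (if toAdd (ph H m s₀ x) = 0 then gB H m s₀ true else gB H m s₀ false) :=
  rfl

theorem sigma_inv_apply (x) :
    (sigma H m s₀)⁻¹ x =
      x * (if toAdd (ph H m s₀ x) = 0 then gB H m s₀ false else gB H m s₀ true) :=
  rfl

/-- The exponent of the reflection corresponding to `s'` (`b = true`) or `s''` (`b = false`). -/
noncomputable def dZ (b : Bool) (g : RAACH H m) : ℤ :=
  if toAdd (qh H m s₀ hs₀ g) = 0 then (if b then 1 else -1) else (if b then -1 else 1)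

theorem qh_mul_zpow (g : RAACH H m) (k : ℤ) :
    toAdd (qh H m s₀ hs₀ (g * g0 H m s₀ ^ k)) =
      toAdd (qh H m s₀ hs₀ g) + (k : ZMod 2) := by
  rw [map_mul, map_zpow, qh_g0, toAdd_mul, toAdd_zpow, toAdd_ofAdd, Int.smul_one_eq_cast]

theorem dZ_pm (b : Bool) (g : RAACH H m) :
    dZ H m s₀ hs₀ b g = 1 ∨ dZ H m s₀ hs₀ b g = -1 := by
  rw [dZ]
  split_ifs <;> simp

theorem qh_flip (g : RAACH H m) (k : ℤ) (hk : k = 1 ∨ k = -1) :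
    (toAdd (qh H m s₀ hs₀ (g * g0 H m s₀ ^ k)) = 0) ↔
      ¬ (toAdd (qh H m s₀ hs₀ g) = 0) := by
  rw [qh_mul_zpow]
  have hcast : (k : ZMod 2) = 1 := by
    rcases hk with rfl | rfl
    · exact Int.cast_one
    · exact zmod2_neg_one
  rw [hcast]
  exact zmod2_add_one_iff _

theorem dZ_flip (b : Bool) (g : RAACH H m) :
    dZ H m s₀ hs₀ b (g * g0 H m s₀ ^ (dZ H m s₀ hs₀ b g)) = - dZ H m s₀ hs₀ b g := by
  have hpm := dZ_pm H m s₀ hs₀ b g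
  have hflip := qh_flip H m s₀ hs₀ g _ hpm
  by_cases hg : toAdd (qh H m s₀ hs₀ g) = 0
  · have h2 : ¬ toAdd (qh H m s₀ hs₀ (g * g0 H m s₀ ^ (dZ H m s₀ hs₀ b g))) = 0 :=
      fun e => (hflip.mp e) hg
    rw [dZ, if_neg h2]
    conv_rhs => rw [dZ, if_pos hg]
    cases b <;> simp
  · have h2 : toAdd (qh H m s₀ hs₀ (g * g0 H m s₀ ^ (dZ H m s₀ hs₀ b g))) = 0 :=
      hflip.mpr hg
    rw [dZ, if_pos h2]
    conv_rhs => rw [dZ, if_neg hg]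
    cases b <;> simp

theorem tau_invol (b : Bool) :
    Function.Involutive (fun g => g * g0 H m s₀ ^ (dZ H m s₀ hs₀ b g)) := by
  intro g
  dsimp only
  rw [dZ_flip, mul_assoc, ← zpow_add, add_neg_cancel, zpow_zero, mul_one]

/-- The reflection permutations of `Γ`. -/
noncomputable def tau (b : Bool) : Equiv.Perm (RAACH H m) :=
  Function.Involutive.toPerm _ (tau_invol H m s₀ hs₀ b)

theorem tau_apply (b : Bool) (g : RAACH H m) :
    tau H m s₀ hs₀ b g = g * g0 H m s₀ ^ (dZ H m s₀ hs₀ b g) := rfl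

theorem tau_sq (b : Bool) : tau H m s₀ hs₀ b * tau H m s₀ hs₀ b = 1 := by
  ext g
  exact tau_invol H m s₀ hs₀ b g

theorem tau_inv (b : Bool) : (tau H m s₀ hs₀ b)⁻¹ = tau H m s₀ hs₀ b :=
  inv_eq_of_mul_eq_one_right (tau_sq H m s₀ hs₀ b)

end TwoGroups

theorem mulRight_one {G : Type*} [Group G] : Equiv.mulRight (1 : G) = 1 := by
  ext x; simp

theorem mulRight_pow {G : Type*} [Group G] (a : G) (k : ℕ) :
    Equiv.mulRight a ^ k = Equiv.mulRight (a ^ k) := by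
  induction k with
  | zero => ext x; simp
  | succ n ih =>
    ext x
    rw [pow_succ, Equiv.Perm.mul_apply, ih]
    simp only [Equiv.coe_mulRight]
    rw [pow_succ', mul_assoc]

theorem mulRight_commute {G : Type*} [Group G] {x y : G} (h : Commute x y) :
    Commute (Equiv.mulRight x) (Equiv.mulRight y) := by
  show _ * _ = _ * _
  ext z
  simp only [Equiv.Perm.mul_apply, Equiv.coe_mulRight]
  rw [mul_assoc, mul_assoc, h.eq]

section Actions

variable (H : SimpleGraph S) (m : S → ℕ∞) (s₀ : S) (hs₀ : m s₀ = (⊤ : ℕ∞))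

/-- Generator images for the action of `Γ` on `Γ'`. -/
noncomputable def FF (s : S) : Equiv.Perm (RAACH (newGraph H s₀ false) (newM m s₀)) :=
  if h : s = s₀ then sigma H m s₀ else Equiv.mulRight (gA H m s₀ ⟨s, h⟩)

theorem FF_s0 : FF H m s₀ s₀ = sigma H m s₀ := dif_pos rfl

theorem FF_ne {s : S} (h : s ≠ s₀) : FF H m s₀ s = Equiv.mulRight (gA H m s₀ ⟨s, h⟩) :=
  dif_neg h

theorem commute_gA_gB {a : {a : S // a ≠ s₀}} (h : H.Adj s₀ a.1) (b : Bool) :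
    Commute (gA H m s₀ a) (gB H m s₀ b) :=
  commute_of_adj ((adj_inl_inr H s₀ false a b).mpr h)

theorem sigma_commute {a : {a : S // a ≠ s₀}} (h : H.Adj s₀ a.1) :
    Commute (sigma H m s₀) (Equiv.mulRight (gA H m s₀ a)) := by
  show _ * _ = _ * _
  ext x
  simp only [Equiv.Perm.mul_apply, Equiv.coe_mulRight, sigma_apply]
  have hph : toAdd (ph H m s₀ (x * gA H m s₀ a)) = toAdd (ph H m s₀ x) := by
    rw [map_mul, ph_gA, mul_one]
  rw [hph, mul_assoc, mul_assoc]
  by_cases hx : toAdd (ph H m s₀ x) = 0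
  · rw [if_pos hx, (commute_gA_gB H m s₀ h true).eq]
  · rw [if_neg hx, (commute_gA_gB H m s₀ h false).eq]

/-- The (antipodally twisted) action of `Γ` on `Γ'`. -/
noncomputable def mu : RAACH H m →* Equiv.Perm (RAACH (newGraph H s₀ false) (newM m s₀)) :=
  lift (FF H m s₀)
    (by
      intro s k hk
      have hs : s ≠ s₀ := fun e => by rw [e, hs₀] at hk; exact absurd hk.symm (by simp)
      rw [FF_ne H m s₀ hs, mulRight_pow,
        (show gA H m s₀ ⟨s, hs⟩ ^ k = 1 from gen_pow_eq_one hk), mulRight_one])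
    (by
      intro s t hadj
      by_cases hs : s = s₀
      · have ht : t ≠ s₀ := fun e => H.loopless.irrefl s₀ (by rw [hs, e] at hadj; exact hadj)
        rw [hs] at hadj ⊢
        rw [FF_s0, FF_ne H m s₀ ht]
        exact sigma_commute H m s₀ hadj
      · by_cases ht : t = s₀
        · rw [ht] at hadj ⊢
          rw [FF_s0, FF_ne H m s₀ hs]
          exact (sigma_commute H m s₀ hadj.symm).symm
        · rw [FF_ne H m s₀ hs, FF_ne H m s₀ ht]
          exact mulRight_commute
            (commute_of_adj ((adj_inl_inl H s₀ false ⟨s, hs⟩ ⟨t, ht⟩).mpr hadj)))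

theorem mu_gen (s : S) : mu H m s₀ hs₀ (raachGen H m s) = FF H m s₀ s := by
  rw [mu, lift_gen]

/-- Generator images for the action of `Γ'` on `Γ`. -/
noncomputable def FL (v : newVerts S s₀) : Equiv.Perm (RAACH H m) :=
  Sum.elim (fun a => Equiv.mulRight (raachGen H m a.1)) (fun b => tau H m s₀ hs₀ b) v

theorem FL_inl (a : {a : S // a ≠ s₀}) :
    FL H m s₀ hs₀ (Sum.inl a) = Equiv.mulRight (raachGen H m a.1) := rfl

theorem FL_inr (b : Bool) : FL H m s₀ hs₀ (Sum.inr b) = tau H m s₀ hs₀ b := rfl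

theorem tau_commute {a : {a : S // a ≠ s₀}} (h : H.Adj s₀ a.1) (b : Bool) :
    Commute (Equiv.mulRight (raachGen H m a.1)) (tau H m s₀ hs₀ b) := by
  show _ * _ = _ * _
  ext g
  simp only [Equiv.Perm.mul_apply, Equiv.coe_mulRight, tau_apply]
  have hq : toAdd (qh H m s₀ hs₀ (g * raachGen H m a.1)) = toAdd (qh H m s₀ hs₀ g) := by
    rw [map_mul, qh_gen_ne H m s₀ hs₀ a.2, mul_one]
  have hd : dZ H m s₀ hs₀ b (g * raachGen H m a.1) = dZ H m s₀ hs₀ b g := by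
    rw [dZ, dZ, hq]
  rw [hd, mul_assoc, mul_assoc,
    ((show Commute (g0 H m s₀) (raachGen H m a.1) from commute_of_adj h).symm.zpow_right _).eq]

/-- The action of `Γ'` on `Γ`. -/
noncomputable def lam : RAACH (newGraph H s₀ false) (newM m s₀) →* Equiv.Perm (RAACH H m) :=
  lift (FL H m s₀ hs₀)
    (by
      rintro (a | b) k hk
      · rw [FL_inl, mulRight_pow, gen_pow_eq_one (H := H) (m := m) (s := a.1) hk, mulRight_one]
      · have h2 : ((2 : ℕ) : ℕ∞) = (k : ℕ∞) := by rw [← hk, newM_inr]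
        have : k = 2 := by exact_mod_cast h2.symm
        subst this
        rw [FL_inr, pow_two, tau_sq])
    (by
      rintro (a | b) (a' | b') hadj
      · exact mulRight_commute (commute_of_adj ((adj_inl_inl H s₀ false a a').mp hadj))
      · rw [FL_inl, FL_inr]
        exact tau_commute H m s₀ hs₀ ((adj_inl_inr H s₀ false a b').mp hadj) b'
      · rw [FL_inl, FL_inr]
        exact (tau_commute H m s₀ hs₀ ((adj_inr_inl H s₀ false b a').mp hadj) b).symm
      · exact absurd hadj (adj_inr_inr H s₀ b b'))

theorem lam_gen (v : newVerts S s₀) :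
    lam H m s₀ hs₀ (raachGen (newGraph H s₀ false) (newM m s₀) v) = FL H m s₀ hs₀ v := by
  rw [lam, lift_gen]

/-- The inverting automorphism of a RAACH. -/
noncomputable def iot : RAACH H m →* RAACH H m :=
  lift (fun s => (raachGen H m s)⁻¹)
    (by
      intro s k hk
      rw [inv_pow, gen_pow_eq_one hk, inv_one])
    (fun s t h => (commute_of_adj h).inv_inv)

theorem iot_gen (s : S) : iot H m (raachGen H m s) = (raachGen H m s)⁻¹ := by
  rw [iot, lift_gen]

/-- The comparison map `Γ → Γ'`. -/
noncomputable def Phi (g : RAACH H m) : RAACH (newGraph H s₀ false) (newM m s₀) :=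
  ((mu H m s₀ hs₀ (iot H m g))⁻¹ : Equiv.Perm _) 1

/-- The comparison map `Γ' → Γ`. -/
noncomputable def Psi (x : RAACH (newGraph H s₀ false) (newM m s₀)) : RAACH H m :=
  ((lam H m s₀ hs₀ (iot (newGraph H s₀ false) (newM m s₀) x))⁻¹ : Equiv.Perm _) 1

theorem Phi_one : Phi H m s₀ hs₀ 1 = 1 := by
  rw [Phi, map_one (iot H m), map_one (mu H m s₀ hs₀), inv_one]
  exact Equiv.Perm.one_apply 1

theorem Psi_one : Psi H m s₀ hs₀ 1 = 1 := by
  rw [Psi, map_one (iot (newGraph H s₀ false) (newM m s₀)), map_one (lam H m s₀ hs₀), inv_one]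
  exact Equiv.Perm.one_apply 1

theorem Phi_mul_gen (g : RAACH H m) (s : S) :
    Phi H m s₀ hs₀ (g * raachGen H m s) = FF H m s₀ s (Phi H m s₀ hs₀ g) := by
  have h1 : (mu H m s₀ hs₀ (iot H m (g * raachGen H m s)))⁻¹ =
      mu H m s₀ hs₀ (raachGen H m s) * (mu H m s₀ hs₀ (iot H m g))⁻¹ := by
    rw [map_mul, iot_gen, map_mul, map_inv, mul_inv_rev, inv_inv]
  rw [Phi, Phi, h1, Equiv.Perm.mul_apply, mu_gen]

theorem Phi_mul_inv_gen (g : RAACH H m) (s : S) :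
    Phi H m s₀ hs₀ (g * (raachGen H m s)⁻¹) = (FF H m s₀ s)⁻¹ (Phi H m s₀ hs₀ g) := by
  have h1 : (mu H m s₀ hs₀ (iot H m (g * (raachGen H m s)⁻¹)))⁻¹ =
      (mu H m s₀ hs₀ (raachGen H m s))⁻¹ * (mu H m s₀ hs₀ (iot H m g))⁻¹ := by
    rw [map_mul, map_inv, iot_gen, inv_inv, map_mul, mul_inv_rev]
  rw [Phi, Phi, h1, Equiv.Perm.mul_apply, mu_gen]

theorem Psi_mul_gen (x : RAACH (newGraph H s₀ false) (newM m s₀)) (v : newVerts S s₀) :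
    Psi H m s₀ hs₀ (x * raachGen (newGraph H s₀ false) (newM m s₀) v) =
      FL H m s₀ hs₀ v (Psi H m s₀ hs₀ x) := by
  have h1 : (lam H m s₀ hs₀ (iot (newGraph H s₀ false) (newM m s₀)
        (x * raachGen (newGraph H s₀ false) (newM m s₀) v)))⁻¹ =
      lam H m s₀ hs₀ (raachGen (newGraph H s₀ false) (newM m s₀) v) *
        (lam H m s₀ hs₀ (iot (newGraph H s₀ false) (newM m s₀) x))⁻¹ := by
    rw [map_mul, iot_gen, map_mul, map_inv, mul_inv_rev, inv_inv]
  rw [Psi, Psi, h1, Equiv.Perm.mul_apply, lam_gen]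

theorem Psi_mul_inv_gen (x : RAACH (newGraph H s₀ false) (newM m s₀)) (v : newVerts S s₀) :
    Psi H m s₀ hs₀ (x * (raachGen (newGraph H s₀ false) (newM m s₀) v)⁻¹) =
      (FL H m s₀ hs₀ v)⁻¹ (Psi H m s₀ hs₀ x) := by
  have h1 : (lam H m s₀ hs₀ (iot (newGraph H s₀ false) (newM m s₀)
        (x * (raachGen (newGraph H s₀ false) (newM m s₀) v)⁻¹)))⁻¹ =
      (lam H m s₀ hs₀ (raachGen (newGraph H s₀ false) (newM m s₀) v))⁻¹ *
        (lam H m s₀ hs₀ (iot (newGraph H s₀ false) (newM m s₀) x))⁻¹ := by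
    rw [map_mul, map_inv, iot_gen, inv_inv, map_mul, mul_inv_rev]
  rw [Psi, Psi, h1, Equiv.Perm.mul_apply, lam_gen]

end Actions

section Main

variable (H : SimpleGraph S) (m : S → ℕ∞) (s₀ : S) (hs₀ : m s₀ = (⊤ : ℕ∞))

theorem qh_gen_s0 : qh H m s₀ hs₀ (raachGen H m s₀) = ofAdd 1 := qh_g0 H m s₀ hs₀

theorem ph_gen_inl (a : {a : S // a ≠ s₀}) :
    ph H m s₀ (raachGen (newGraph H s₀ false) (newM m s₀) (Sum.inl a)) = 1 := ph_gA H m s₀ a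

theorem ph_gen_inr (b : Bool) :
    ph H m s₀ (raachGen (newGraph H s₀ false) (newM m s₀) (Sum.inr b)) = ofAdd 1 :=
  ph_gB H m s₀ b

theorem zmod2_neg_one' : (-1 : ZMod 2) = 1 := by
  rw [neg_eq_iff_add_eq_zero, zmod2_one_add_one]

theorem dZ_val_tt0 {g : RAACH H m} (h : toAdd (qh H m s₀ hs₀ g) = 0) :
    dZ H m s₀ hs₀ true g = 1 := by rw [dZ, if_pos h, if_pos rfl]

theorem dZ_val_ft0 {g : RAACH H m} (h : toAdd (qh H m s₀ hs₀ g) = 0) :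
    dZ H m s₀ hs₀ false g = -1 := by rw [dZ, if_pos h, if_neg Bool.false_ne_true]

theorem dZ_val_tt1 {g : RAACH H m} (h : ¬ toAdd (qh H m s₀ hs₀ g) = 0) :
    dZ H m s₀ hs₀ true g = -1 := by rw [dZ, if_neg h, if_pos rfl]

theorem dZ_val_ft1 {g : RAACH H m} (h : ¬ toAdd (qh H m s₀ hs₀ g) = 0) :
    dZ H m s₀ hs₀ false g = 1 := by rw [dZ, if_neg h, if_neg Bool.false_ne_true]

theorem ph_mu (g : RAACH H m) :
    ∀ x, ph H m s₀ (mu H m s₀ hs₀ g x) = qh H m s₀ hs₀ g * ph H m s₀ x := by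
  refine gen_induction
    (fun g => ∀ x, ph H m s₀ (mu H m s₀ hs₀ g x) = qh H m s₀ hs₀ g * ph H m s₀ x)
    ?_ ?_ ?_ ?_ g
  · intro x
    rw [map_one, map_one, one_mul, Equiv.Perm.one_apply]
  · intro s x
    rw [mu_gen]
    by_cases hs : s = s₀
    · rw [hs, FF_s0, sigma_apply, map_mul, qh_gen_s0]
      by_cases hx : toAdd (ph H m s₀ x) = 0
      · rw [if_pos hx, ph_gB]; exact mul_comm _ _
      · rw [if_neg hx, ph_gB]; exact mul_comm _ _
    · rw [FF_ne H m s₀ hs]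
      show ph H m s₀ (x * gA H m s₀ ⟨s, hs⟩) = _
      rw [map_mul, ph_gA, mul_one, qh_gen_ne H m s₀ hs₀ hs, one_mul]
  · intro g hP x
    have h := hP (mu H m s₀ hs₀ g⁻¹ x)
    have hx : mu H m s₀ hs₀ g (mu H m s₀ hs₀ g⁻¹ x) = x := by
      rw [← Equiv.Perm.mul_apply, ← map_mul, mul_inv_cancel, map_one, Equiv.Perm.one_apply]
    rw [hx] at h
    rw [show qh H m s₀ hs₀ g⁻¹ = (qh H m s₀ hs₀ g)⁻¹ from map_inv _ _, h, inv_mul_cancel_left]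
  · intro a b ha hb x
    rw [map_mul, Equiv.Perm.mul_apply, ha, hb, map_mul, mul_assoc]

theorem qh_iot (g : RAACH H m) : qh H m s₀ hs₀ (iot H m g) = (qh H m s₀ hs₀ g)⁻¹ := by
  refine gen_induction (fun g => qh H m s₀ hs₀ (iot H m g) = (qh H m s₀ hs₀ g)⁻¹) ?_ ?_ ?_ ?_ g
  · show qh H m s₀ hs₀ (iot H m 1) = (qh H m s₀ hs₀ 1)⁻¹
    rw [map_one, map_one, inv_one]
  · intro s; rw [iot_gen, map_inv]
  · intro x hx; rw [map_inv, map_inv, hx, map_inv]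
  · intro a b ha hb
    rw [map_mul, map_mul, ha, hb, map_mul, mul_inv]

theorem ph_iot' (x : RAACH (newGraph H s₀ false) (newM m s₀)) :
    ph H m s₀ (iot (newGraph H s₀ false) (newM m s₀) x) = (ph H m s₀ x)⁻¹ := by
  refine gen_induction (fun x => ph H m s₀ (iot (newGraph H s₀ false) (newM m s₀) x)
      = (ph H m s₀ x)⁻¹) ?_ ?_ ?_ ?_ x
  · show ph H m s₀ (iot (newGraph H s₀ false) (newM m s₀) 1) = (ph H m s₀ 1)⁻¹
    rw [map_one, map_one, inv_one]
  · intro v; rw [iot_gen, map_inv]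
  · intro x hx; rw [map_inv, map_inv, hx, map_inv]
  · intro a b ha hb
    rw [map_mul, map_mul, ha, hb, map_mul, mul_inv]

theorem ph_Phi (g : RAACH H m) : ph H m s₀ (Phi H m s₀ hs₀ g) = qh H m s₀ hs₀ g := by
  have h := ph_mu H m s₀ hs₀ (iot H m g) (Phi H m s₀ hs₀ g)
  have h2 : mu H m s₀ hs₀ (iot H m g) (Phi H m s₀ hs₀ g) = 1 := by
    rw [Phi]; exact Equiv.apply_symm_apply _ 1
  rw [h2, map_one, qh_iot] at h
  exact (inv_mul_eq_one.mp h.symm).symm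

theorem qh_lam (x : RAACH (newGraph H s₀ false) (newM m s₀)) :
    ∀ g, qh H m s₀ hs₀ (lam H m s₀ hs₀ x g) = ph H m s₀ x * qh H m s₀ hs₀ g := by
  refine gen_induction
    (fun x => ∀ g, qh H m s₀ hs₀ (lam H m s₀ hs₀ x g) = ph H m s₀ x * qh H m s₀ hs₀ g)
    ?_ ?_ ?_ ?_ x
  · intro g
    rw [map_one, map_one, one_mul, Equiv.Perm.one_apply]
  · rintro (a | b) g
    · erw [lam_gen, FL_inl]
      show qh H m s₀ hs₀ (g * raachGen H m a.1) = _
      rw [map_mul, qh_gen_ne H m s₀ hs₀ a.2, mul_one, ph_gen_inl, one_mul]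
    · erw [lam_gen, FL_inr, tau_apply, map_mul, map_zpow, qh_g0, ph_gen_inr]
      have : (ofAdd (1 : ZMod 2)) ^ (dZ H m s₀ hs₀ b g) = ofAdd 1 := by
        rcases dZ_pm H m s₀ hs₀ b g with h | h
        · rw [h, zpow_one]
        · rw [h, zpow_neg, zpow_one, ← ofAdd_neg, zmod2_neg_one']
      rw [this]
      exact mul_comm _ _
  · intro x hP g
    have h := hP (lam H m s₀ hs₀ x⁻¹ g)
    have hx : lam H m s₀ hs₀ x (lam H m s₀ hs₀ x⁻¹ g) = g := by
      rw [← Equiv.Perm.mul_apply, ← map_mul, mul_inv_cancel, map_one, Equiv.Perm.one_apply]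
    rw [hx] at h
    rw [show ph H m s₀ x⁻¹ = (ph H m s₀ x)⁻¹ from map_inv _ _, h, inv_mul_cancel_left]
  · intro a b ha hb g
    rw [map_mul, Equiv.Perm.mul_apply, ha, hb, map_mul, mul_assoc]

theorem qh_Psi (x : RAACH (newGraph H s₀ false) (newM m s₀)) :
    qh H m s₀ hs₀ (Psi H m s₀ hs₀ x) = ph H m s₀ x := by
  have h := qh_lam H m s₀ hs₀ (iot (newGraph H s₀ false) (newM m s₀) x) (Psi H m s₀ hs₀ x)
  have h2 : lam H m s₀ hs₀ (iot (newGraph H s₀ false) (newM m s₀) x) (Psi H m s₀ hs₀ x) = 1 := by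
    rw [Psi]; exact Equiv.apply_symm_apply _ 1
  rw [h2, map_one, ph_iot'] at h
  exact (inv_mul_eq_one.mp h.symm).symm

theorem Psi_mu (g : RAACH H m) :
    ∀ x, Psi H m s₀ hs₀ ((mu H m s₀ hs₀ (iot H m g))⁻¹ x) = Psi H m s₀ hs₀ x * g := by
  refine gen_induction
    (fun g => ∀ x, Psi H m s₀ hs₀ ((mu H m s₀ hs₀ (iot H m g))⁻¹ x) = Psi H m s₀ hs₀ x * g)
    ?_ ?_ ?_ ?_ g
  · intro x
    rw [map_one, map_one, inv_one, mul_one, Equiv.Perm.one_apply]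
  · intro s x
    have key : (mu H m s₀ hs₀ (iot H m (raachGen H m s)))⁻¹ = mu H m s₀ hs₀ (raachGen H m s) := by
      rw [iot_gen, map_inv, inv_inv]
    rw [key, mu_gen]
    by_cases hs : s = s₀
    · rw [hs, FF_s0, sigma_apply]
      by_cases hx : toAdd (ph H m s₀ x) = 0
      · rw [if_pos hx]
        erw [show gB H m s₀ true = raachGen (newGraph H s₀ false) (newM m s₀) (Sum.inr true)
            from rfl, Psi_mul_gen, FL_inr, tau_apply]
        have hq : toAdd (qh H m s₀ hs₀ (Psi H m s₀ hs₀ x)) = 0 := by rw [qh_Psi]; exact hx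
        rw [dZ_val_tt0 H m s₀ hs₀ hq, zpow_one]
        rfl
      · rw [if_neg hx]
        erw [show gB H m s₀ false = raachGen (newGraph H s₀ false) (newM m s₀) (Sum.inr false)
            from rfl, Psi_mul_gen, FL_inr, tau_apply]
        have hq : ¬ toAdd (qh H m s₀ hs₀ (Psi H m s₀ hs₀ x)) = 0 := by rw [qh_Psi]; exact hx
        rw [dZ_val_ft1 H m s₀ hs₀ hq, zpow_one]
        rfl
    · rw [FF_ne H m s₀ hs]
      show Psi H m s₀ hs₀ (x * raachGen (newGraph H s₀ false) (newM m s₀) (Sum.inl ⟨s, hs⟩)) = _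
      erw [Psi_mul_gen, FL_inl]
      rfl
  · intro g hP x
    have key : (mu H m s₀ hs₀ (iot H m g⁻¹))⁻¹ = mu H m s₀ hs₀ (iot H m g) := by
      rw [map_inv, map_inv, inv_inv]
    rw [key]
    have h := hP (mu H m s₀ hs₀ (iot H m g) x)
    rw [show ∀ (e : Equiv.Perm _) x, e⁻¹ (e x) = x from fun e x => Equiv.symm_apply_apply e x] at h
    exact eq_mul_inv_iff_mul_eq.mpr h.symm
  · intro a b ha hb x
    have key : (mu H m s₀ hs₀ (iot H m (a * b)))⁻¹ =
        (mu H m s₀ hs₀ (iot H m b))⁻¹ * (mu H m s₀ hs₀ (iot H m a))⁻¹ := by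
      rw [map_mul, map_mul, mul_inv_rev]
    rw [key, Equiv.Perm.mul_apply, hb, ha, mul_assoc]

theorem Psi_Phi (g : RAACH H m) : Psi H m s₀ hs₀ (Phi H m s₀ hs₀ g) = g := by
  have h := Psi_mu H m s₀ hs₀ g 1
  rw [Psi_one, one_mul] at h
  exact h

theorem Phi_lam (x : RAACH (newGraph H s₀ false) (newM m s₀)) :
    ∀ g, Phi H m s₀ hs₀ ((lam H m s₀ hs₀ (iot (newGraph H s₀ false) (newM m s₀) x))⁻¹ g)
      = Phi H m s₀ hs₀ g * x := by
  refine gen_induction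
    (fun x => ∀ g, Phi H m s₀ hs₀
        ((lam H m s₀ hs₀ (iot (newGraph H s₀ false) (newM m s₀) x))⁻¹ g)
      = Phi H m s₀ hs₀ g * x) ?_ ?_ ?_ ?_ x
  · intro g
    rw [map_one, map_one, inv_one, mul_one, Equiv.Perm.one_apply]
  · rintro (a | b) g
    · have key : (lam H m s₀ hs₀ (iot (newGraph H s₀ false) (newM m s₀)
          (raachGen (newGraph H s₀ false) (newM m s₀) (Sum.inl a))))⁻¹ =
          lam H m s₀ hs₀ (raachGen (newGraph H s₀ false) (newM m s₀) (Sum.inl a)) := by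
        erw [iot_gen, map_inv, inv_inv]
      erw [key, lam_gen, FL_inl]
      show Phi H m s₀ hs₀ (g * raachGen H m a.1) = _
      rw [Phi_mul_gen, FF_ne H m s₀ a.2]
      show Phi H m s₀ hs₀ g * gA H m s₀ ⟨a.1, a.2⟩ = _
      obtain ⟨av, ha⟩ := a
      rfl
    · have key : (lam H m s₀ hs₀ (iot (newGraph H s₀ false) (newM m s₀)
          (raachGen (newGraph H s₀ false) (newM m s₀) (Sum.inr b))))⁻¹ =
          lam H m s₀ hs₀ (raachGen (newGraph H s₀ false) (newM m s₀) (Sum.inr b)) := by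
        erw [iot_gen, map_inv, inv_inv]
      erw [key, lam_gen, FL_inr, tau_apply]
      by_cases hg : toAdd (qh H m s₀ hs₀ g) = 0
      · have hph : toAdd (ph H m s₀ (Phi H m s₀ hs₀ g)) = 0 := by rw [ph_Phi]; exact hg
        cases b
        · rw [dZ_val_ft0 H m s₀ hs₀ hg, zpow_neg, zpow_one]
          rw [show g0 H m s₀ = raachGen H m s₀ from rfl, Phi_mul_inv_gen, FF_s0,
            sigma_inv_apply, if_pos hph]
          rfl
        · rw [dZ_val_tt0 H m s₀ hs₀ hg, zpow_one]
          rw [show g0 H m s₀ = raachGen H m s₀ from rfl, Phi_mul_gen, FF_s0,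
            sigma_apply, if_pos hph]
          rfl
      · have hph : ¬ toAdd (ph H m s₀ (Phi H m s₀ hs₀ g)) = 0 := by rw [ph_Phi]; exact hg
        cases b
        · rw [dZ_val_ft1 H m s₀ hs₀ hg, zpow_one]
          rw [show g0 H m s₀ = raachGen H m s₀ from rfl, Phi_mul_gen, FF_s0,
            sigma_apply, if_neg hph]
          rfl
        · rw [dZ_val_tt1 H m s₀ hs₀ hg, zpow_neg, zpow_one]
          rw [show g0 H m s₀ = raachGen H m s₀ from rfl, Phi_mul_inv_gen, FF_s0,
            sigma_inv_apply, if_neg hph]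
          rfl
  · intro x hP g
    have key : (lam H m s₀ hs₀ (iot (newGraph H s₀ false) (newM m s₀) x⁻¹))⁻¹ =
        lam H m s₀ hs₀ (iot (newGraph H s₀ false) (newM m s₀) x) := by
      rw [map_inv, map_inv, inv_inv]
    rw [key]
    have h := hP (lam H m s₀ hs₀ (iot (newGraph H s₀ false) (newM m s₀) x) g)
    rw [show ∀ (e : Equiv.Perm _) x, e⁻¹ (e x) = x from fun e x => Equiv.symm_apply_apply e x] at h
    exact eq_mul_inv_iff_mul_eq.mpr h.symm
  · intro a b ha hb g
    have key : (lam H m s₀ hs₀ (iot (newGraph H s₀ false) (newM m s₀) (a * b)))⁻¹ =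
        (lam H m s₀ hs₀ (iot (newGraph H s₀ false) (newM m s₀) b))⁻¹ *
          (lam H m s₀ hs₀ (iot (newGraph H s₀ false) (newM m s₀) a))⁻¹ := by
      rw [map_mul, map_mul, mul_inv_rev]
    rw [key, Equiv.Perm.mul_apply, hb, ha, mul_assoc]

theorem Phi_Psi (x : RAACH (newGraph H s₀ false) (newM m s₀)) :
    Phi H m s₀ hs₀ (Psi H m s₀ hs₀ x) = x := by
  have h := Phi_lam H m s₀ hs₀ x 1
  rw [Phi_one, one_mul] at h
  exact h

/-- The comparison bijection `Γ ≃ Γ'`. -/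
noncomputable def PhiEquiv : RAACH H m ≃ RAACH (newGraph H s₀ false) (newM m s₀) where
  toFun := Phi H m s₀ hs₀
  invFun := Psi H m s₀ hs₀
  left_inv := Psi_Phi H m s₀ hs₀
  right_inv := Phi_Psi H m s₀ hs₀

theorem mulRight_inv_perm {G : Type*} [Group G] (a : G) :
    (Equiv.mulRight a : Equiv.Perm G)⁻¹ = Equiv.mulRight a⁻¹ := by
  rw [Equiv.Perm.inv_def, Equiv.mulRight_symm]

theorem Phi_star_step (x : RAACH H m) (u : RAACH H m) (hu : u ∈ Sstar H m) :
    ∃ u' ∈ Sstar (newGraph H s₀ false) (newM m s₀),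
      Phi H m s₀ hs₀ (x * u) = Phi H m s₀ hs₀ x * u' := by
  obtain ⟨s, h | h⟩ := hu
  · subst h
    by_cases hs : s = s₀
    · rw [hs, Phi_mul_gen, FF_s0, sigma_apply]
      by_cases hx : toAdd (ph H m s₀ (Phi H m s₀ hs₀ x)) = 0
      · rw [if_pos hx]
        exact ⟨gB H m s₀ true, ⟨Sum.inr true, Or.inl rfl⟩, rfl⟩
      · rw [if_neg hx]
        exact ⟨gB H m s₀ false, ⟨Sum.inr false, Or.inl rfl⟩, rfl⟩
    · rw [Phi_mul_gen, FF_ne H m s₀ hs]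
      exact ⟨gA H m s₀ ⟨s, hs⟩, ⟨Sum.inl ⟨s, hs⟩, Or.inl rfl⟩, rfl⟩
  · subst h
    by_cases hs : s = s₀
    · rw [hs, Phi_mul_inv_gen, FF_s0, sigma_inv_apply]
      by_cases hx : toAdd (ph H m s₀ (Phi H m s₀ hs₀ x)) = 0
      · rw [if_pos hx]
        exact ⟨gB H m s₀ false, ⟨Sum.inr false, Or.inl rfl⟩, rfl⟩
      · rw [if_neg hx]
        exact ⟨gB H m s₀ true, ⟨Sum.inr true, Or.inl rfl⟩, rfl⟩
    · rw [Phi_mul_inv_gen, FF_ne H m s₀ hs, mulRight_inv_perm]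
      exact ⟨(gA H m s₀ ⟨s, hs⟩)⁻¹, ⟨Sum.inl ⟨s, hs⟩, Or.inr rfl⟩, rfl⟩

theorem Psi_star_step (x : RAACH (newGraph H s₀ false) (newM m s₀))
    (u : RAACH (newGraph H s₀ false) (newM m s₀))
    (hu : u ∈ Sstar (newGraph H s₀ false) (newM m s₀)) :
    ∃ u' ∈ Sstar H m, Psi H m s₀ hs₀ (x * u) = Psi H m s₀ hs₀ x * u' := by
  obtain ⟨v, h | h⟩ := hu
  · subst h
    cases v with
    | inl a =>
      erw [Psi_mul_gen, FL_inl]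
      exact ⟨raachGen H m a.1, ⟨a.1, Or.inl rfl⟩, rfl⟩
    | inr b =>
      erw [Psi_mul_gen, FL_inr, tau_apply]
      rcases dZ_pm H m s₀ hs₀ b (Psi H m s₀ hs₀ x) with hd | hd
      · rw [hd, zpow_one]
        exact ⟨raachGen H m s₀, ⟨s₀, Or.inl rfl⟩, rfl⟩
      · rw [hd, zpow_neg, zpow_one]
        exact ⟨(raachGen H m s₀)⁻¹, ⟨s₀, Or.inr rfl⟩, rfl⟩
  · subst h
    cases v with
    | inl a =>
      erw [Psi_mul_inv_gen, FL_inl, mulRight_inv_perm]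
      exact ⟨(raachGen H m a.1)⁻¹, ⟨a.1, Or.inr rfl⟩, rfl⟩
    | inr b =>
      erw [Psi_mul_inv_gen, FL_inr, tau_inv, tau_apply]
      rcases dZ_pm H m s₀ hs₀ b (Psi H m s₀ hs₀ x) with hd | hd
      · rw [hd, zpow_one]
        exact ⟨raachGen H m s₀, ⟨s₀, Or.inl rfl⟩, rfl⟩
      · rw [hd, zpow_neg, zpow_one]
        exact ⟨(raachGen H m s₀)⁻¹, ⟨s₀, Or.inr rfl⟩, rfl⟩

/-- The isomorphism of the Cayley graphs. -/
noncomputable def cayIso : cayRAACH H m ≃g cayRAACH (newGraph H s₀ false) (newM m s₀) where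
  toEquiv := PhiEquiv H m s₀ hs₀
  map_rel_iff' := by
    intro x y
    show (cayRAACH (newGraph H s₀ false) (newM m s₀)).Adj
      (Phi H m s₀ hs₀ x) (Phi H m s₀ hs₀ y) ↔ (cayRAACH H m).Adj x y
    constructor
    · rintro ⟨hne, hd⟩
      have hxy : x ≠ y := fun e => hne (by rw [e])
      refine ⟨hxy, ?_⟩
      rcases hd with h | h
      · obtain ⟨u, hu, he⟩ := Psi_star_step H m s₀ hs₀ (Phi H m s₀ hs₀ x) _ h
        rw [mul_inv_cancel_left, Psi_Phi, Psi_Phi] at he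
        exact Or.inl (by rw [he, inv_mul_cancel_left]; exact hu)
      · obtain ⟨u, hu, he⟩ := Psi_star_step H m s₀ hs₀ (Phi H m s₀ hs₀ y) _ h
        rw [mul_inv_cancel_left, Psi_Phi, Psi_Phi] at he
        exact Or.inr (by rw [he, inv_mul_cancel_left]; exact hu)
    · rintro ⟨hxy, hd⟩
      have hne : Phi H m s₀ hs₀ x ≠ Phi H m s₀ hs₀ y := fun e => hxy (by
        have h2 := congrArg (Psi H m s₀ hs₀) e
        rwa [Psi_Phi, Psi_Phi] at h2)
      refine ⟨hne, ?_⟩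
      rcases hd with h | h
      · obtain ⟨u', hu', he⟩ := Phi_star_step H m s₀ hs₀ x _ h
        rw [mul_inv_cancel_left] at he
        exact Or.inl (by rw [he, inv_mul_cancel_left]; exact hu')
      · obtain ⟨u', hu', he⟩ := Phi_star_step H m s₀ hs₀ y _ h
        rw [mul_inv_cancel_left] at he
        exact Or.inr (by rw [he, inv_mul_cancel_left]; exact hu')

end Main

/-! ### Weights of pairs of generators -/

theorem gsgn_true {G : Type*} [Group G] (g : G) : gsgn true g = g := if_pos rfl

theorem gsgn_false {G : Type*} [Group G] (g : G) : gsgn false g = g⁻¹ :=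
  if_neg Bool.false_ne_true

theorem orderOf_gsgn {G : Type*} [Group G] (a : Bool) (g : G) :
    orderOf (gsgn a g) = orderOf g := by
  cases a
  · rw [gsgn_false, orderOf_inv]
  · rw [gsgn_true]

theorem gsgn_eq_inv_iff {G : Type*} [Group G] (a : Bool) (g : G) :
    gsgn a g = (gsgn a g)⁻¹ ↔ g = g⁻¹ := by
  cases a
  · rw [gsgn_false, inv_inv, eq_comm]
  · rw [gsgn_true]

theorem toNat2 : ((2 : ℕ∞)).toNat = 2 := by rw [← Nat.cast_ofNat, ENat.toNat_coe]
theorem toNat3 : ((3 : ℕ∞)).toNat = 3 := by rw [← Nat.cast_ofNat, ENat.toNat_coe]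
theorem toNat4 : ((4 : ℕ∞)).toNat = 4 := by rw [← Nat.cast_ofNat, ENat.toNat_coe]

theorem e21 : (2 : ℕ∞) ≠ 1 := by exact_mod_cast (by norm_num : (2:ℕ) ≠ 1)
theorem e31 : (3 : ℕ∞) ≠ 1 := by exact_mod_cast (by norm_num : (3:ℕ) ≠ 1)
theorem e41 : (4 : ℕ∞) ≠ 1 := by exact_mod_cast (by norm_num : (4:ℕ) ≠ 1)
theorem e24 : (2 : ℕ∞) ≠ 4 := by exact_mod_cast (by norm_num : (2:ℕ) ≠ 4)
theorem e23 : (2 : ℕ∞) ≠ 3 := by exact_mod_cast (by norm_num : (2:ℕ) ≠ 3)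
theorem e34 : (3 : ℕ∞) ≠ 4 := by exact_mod_cast (by norm_num : (3:ℕ) ≠ 4)

theorem hm_ne_one {m : S → ℕ∞} (hms : m s = 2 ∨ m s = 3 ∨ m s = 4 ∨ m s = (⊤ : ℕ∞)) :
    m s ≠ 1 := by
  rcases hms with h | h | h | h <;> rw [h]
  · exact e21
  · exact e31
  · exact e41
  · simp

theorem gsgn_gen_ne {H : SimpleGraph S} {m : S → ℕ∞} {s t : S} (hst : s ≠ t)
    (h1 : m s ≠ 1) (h2 : m t ≠ 1) (a b : Bool) :
    gsgn a (raachGen H m s) ≠ gsgn b (raachGen H m t) := by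
  cases a <;> cases b
  · rw [gsgn_false, gsgn_false]
    exact fun e => gen_ne_gen hst h2 (inv_injective e)
  · rw [gsgn_false, gsgn_true]
    exact fun e => gen_ne_inv_gen hst.symm h1 e.symm
  · rw [gsgn_true, gsgn_false]
    exact gen_ne_inv_gen hst h2
  · rw [gsgn_true, gsgn_true]
    exact gen_ne_gen hst h2

/-- Master computation of the weight of a pair of elements of `S*`. -/
theorem apWeight_gen {H : SimpleGraph S} {m : S → ℕ∞}
    (hm : ∀ u, m u = 2 ∨ m u = 3 ∨ m u = 4 ∨ m u = (⊤ : ℕ∞)) (s t : S) (a b : Bool) :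
    apWeight H m (gsgn a (raachGen H m s)) (gsgn b (raachGen H m t)) =
      if s = t then
        (if m s = 4 ∧ a ≠ b then 1 else if m s = 3 ∧ a ≠ b then 2 else 0)
      else if H.Adj s t then 1 else 0 := by
  rw [apWeight]
  by_cases hst : s = t
  · subst hst
    rw [if_pos rfl]
    have hord : orderOf (gsgn a (raachGen H m s)) = (m s).toNat := by
      rw [orderOf_gsgn, orderOf_gen]
    have hiv : gsgn a (raachGen H m s) = (gsgn a (raachGen H m s))⁻¹ ↔ (m s).toNat ∣ 2 := by
      rw [gsgn_eq_inv_iff, gen_eq_inv_iff]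
    by_cases hab : a = b
    · subst hab
      rw [if_neg (by simp : ¬ (m s = 4 ∧ a ≠ a)), if_neg (by simp : ¬ (m s = 3 ∧ a ≠ a))]
      rw [if_neg (fun hc => hc.2.1 rfl)]
      rcases hm s with h | h | h | h
      · have ho : orderOf (gsgn a (raachGen H m s)) = 2 := by rw [hord, h, toNat2]
        rw [if_neg (fun hc => by rw [ho] at hc; exact (by norm_num : (2:ℕ) ≠ 4) hc.2),
          if_neg (fun hc => by rw [ho] at hc; exact (by norm_num : (2:ℕ) ≠ 3) hc.2)]
      · have hne : ¬ gsgn a (raachGen H m s) = (gsgn a (raachGen H m s))⁻¹ := by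
          rw [hiv, h, toNat3]; norm_num
        rw [if_neg (fun hc => hne hc.1), if_neg (fun hc => hne hc.1)]
      · have hne : ¬ gsgn a (raachGen H m s) = (gsgn a (raachGen H m s))⁻¹ := by
          rw [hiv, h, toNat4]; norm_num
        rw [if_neg (fun hc => hne hc.1), if_neg (fun hc => hne hc.1)]
      · have hne : ¬ gsgn a (raachGen H m s) = (gsgn a (raachGen H m s))⁻¹ := by
          rw [hiv, h]; simp
        rw [if_neg (fun hc => hne hc.1), if_neg (fun hc => hne hc.1)]
    · have hv : gsgn b (raachGen H m s) = (gsgn a (raachGen H m s))⁻¹ := by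
        cases a <;> cases b
        · exact absurd rfl hab
        · rw [gsgn_false, gsgn_true, inv_inv]
        · rw [gsgn_true, gsgn_false]
        · exact absurd rfl hab
      rw [hv]
      rw [if_neg (fun hc => hc.2.2 rfl)]
      rcases hm s with h | h | h | h
      · have ho : orderOf (gsgn a (raachGen H m s)) = 2 := by rw [hord, h, toNat2]
        rw [if_neg (fun hc => by rw [ho] at hc; exact (by norm_num : (2:ℕ) ≠ 4) hc.2),
          if_neg (fun hc => by rw [ho] at hc; exact (by norm_num : (2:ℕ) ≠ 3) hc.2),
          if_neg (fun hc => by rw [h] at hc; exact e24 hc.1),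
          if_neg (fun hc => by rw [h] at hc; exact e23 hc.1)]
      · have ho : orderOf (gsgn a (raachGen H m s)) = 3 := by rw [hord, h, toNat3]
        rw [if_neg (fun hc => by rw [ho] at hc; exact (by norm_num : (3:ℕ) ≠ 4) hc.2),
          if_pos ⟨rfl, ho⟩,
          if_neg (fun hc => by rw [h] at hc; exact e34 hc.1),
          if_pos ⟨h, hab⟩]
      · have ho : orderOf (gsgn a (raachGen H m s)) = 4 := by rw [hord, h, toNat4]
        rw [if_pos ⟨rfl, ho⟩, if_pos ⟨h, hab⟩]
      · have ho : orderOf (gsgn a (raachGen H m s)) = 0 := by rw [hord, h]; simp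
        rw [if_neg (fun hc => by rw [ho] at hc; exact (by norm_num : (0:ℕ) ≠ 4) hc.2),
          if_neg (fun hc => by rw [ho] at hc; exact (by norm_num : (0:ℕ) ≠ 3) hc.2),
          if_neg (fun hc => by rw [h] at hc; exact (by simp : (⊤:ℕ∞) ≠ 4) hc.1),
          if_neg (fun hc => by rw [h] at hc; exact (by simp : (⊤:ℕ∞) ≠ 3) hc.1)]
  · rw [if_neg hst]
    have h1 : m s ≠ 1 := hm_ne_one (hm s)
    have h2 : m t ≠ 1 := hm_ne_one (hm t)
    have hvu : gsgn b (raachGen H m t) ≠ gsgn a (raachGen H m s) :=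
      gsgn_gen_ne (fun e => hst e.symm) h2 h1 b a
    have hvu' : gsgn b (raachGen H m t) ≠ (gsgn a (raachGen H m s))⁻¹ := by
      have : (gsgn a (raachGen H m s))⁻¹ = gsgn (! a) (raachGen H m s) := by
        cases a
        · rw [gsgn_false, inv_inv, Bool.not_false, gsgn_true]
        · rw [gsgn_true, Bool.not_true, gsgn_false]
      rw [this]
      exact gsgn_gen_ne (fun e => hst e.symm) h2 h1 b (! a)
    have hcom : Commute (gsgn a (raachGen H m s)) (gsgn b (raachGen H m t)) ↔
        (s = t ∨ H.Adj s t) := by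
      rw [commute_gsgn]
      exact commute_gen_iff hm s t
    by_cases hadj : H.Adj s t
    · rw [if_pos ⟨hcom.mpr (Or.inr hadj), hvu, hvu'⟩, if_pos hadj]
    · rw [if_neg (fun hc => (hcom.mp hc.1).elim hst hadj),
        if_neg (fun hc => hvu' hc.1), if_neg (fun hc => hvu' hc.1), if_neg hadj]

section Transfer

variable (H : SimpleGraph S) (m : S → ℕ∞) (s₀ : S) (hs₀ : m s₀ = (⊤ : ℕ∞))

theorem Phi_gen_ne {s : S} (h : s ≠ s₀) :
    Phi H m s₀ hs₀ (raachGen H m s) = raachGen (newGraph H s₀ false) (newM m s₀)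
      (Sum.inl ⟨s, h⟩) := by
  have h1 := Phi_mul_gen H m s₀ hs₀ 1 s
  rw [one_mul, Phi_one] at h1
  rw [h1, FF_ne H m s₀ h]
  rw [Equiv.coe_mulRight]
  exact one_mul _

theorem Phi_inv_gen_ne {s : S} (h : s ≠ s₀) :
    Phi H m s₀ hs₀ ((raachGen H m s)⁻¹) = (raachGen (newGraph H s₀ false) (newM m s₀)
      (Sum.inl ⟨s, h⟩))⁻¹ := by
  have h1 := Phi_mul_inv_gen H m s₀ hs₀ 1 s
  rw [one_mul, Phi_one] at h1
  rw [h1, FF_ne H m s₀ h, mulRight_inv_perm]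
  rw [Equiv.coe_mulRight]
  exact one_mul _

theorem ph_one_zero : toAdd (ph H m s₀ 1) = 0 := by rw [map_one, toAdd_one]

theorem qh_one_zero : toAdd (qh H m s₀ hs₀ 1) = 0 := by rw [map_one, toAdd_one]

theorem Phi_gen_s0 :
    Phi H m s₀ hs₀ (raachGen H m s₀) =
      raachGen (newGraph H s₀ false) (newM m s₀) (Sum.inr true) := by
  have h1 := Phi_mul_gen H m s₀ hs₀ 1 s₀
  rw [one_mul, Phi_one] at h1
  rw [h1, FF_s0, sigma_apply, if_pos (ph_one_zero H m s₀)]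
  exact one_mul _

theorem Phi_inv_gen_s0 :
    Phi H m s₀ hs₀ ((raachGen H m s₀)⁻¹) =
      raachGen (newGraph H s₀ false) (newM m s₀) (Sum.inr false) := by
  have h1 := Phi_mul_inv_gen H m s₀ hs₀ 1 s₀
  rw [one_mul, Phi_one] at h1
  rw [h1, FF_s0, sigma_inv_apply, if_pos (ph_one_zero H m s₀)]
  exact one_mul _

theorem Psi_gen_inl (a : {a : S // a ≠ s₀}) :
    Psi H m s₀ hs₀ (raachGen (newGraph H s₀ false) (newM m s₀) (Sum.inl a)) =
      raachGen H m a.1 := by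
  have h1 := Psi_mul_gen H m s₀ hs₀ 1 (Sum.inl a)
  rw [one_mul, Psi_one] at h1
  rw [h1, FL_inl]
  rw [Equiv.coe_mulRight]
  exact one_mul _

theorem Psi_inv_gen_inl (a : {a : S // a ≠ s₀}) :
    Psi H m s₀ hs₀ ((raachGen (newGraph H s₀ false) (newM m s₀) (Sum.inl a))⁻¹) =
      (raachGen H m a.1)⁻¹ := by
  have h1 := Psi_mul_inv_gen H m s₀ hs₀ 1 (Sum.inl a)
  rw [one_mul, Psi_one] at h1
  rw [h1, FL_inl, mulRight_inv_perm]
  rw [Equiv.coe_mulRight]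
  exact one_mul _

theorem Psi_gen_inr_true :
    Psi H m s₀ hs₀ (raachGen (newGraph H s₀ false) (newM m s₀) (Sum.inr true)) =
      raachGen H m s₀ := by
  have h1 := Psi_mul_gen H m s₀ hs₀ 1 (Sum.inr true)
  rw [one_mul, Psi_one] at h1
  rw [h1, FL_inr, tau_apply, dZ_val_tt0 H m s₀ hs₀ (qh_one_zero H m s₀ hs₀), zpow_one]
  exact one_mul _

theorem Psi_gen_inr_false :
    Psi H m s₀ hs₀ (raachGen (newGraph H s₀ false) (newM m s₀) (Sum.inr false)) =
      (raachGen H m s₀)⁻¹ := by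
  have h1 := Psi_mul_gen H m s₀ hs₀ 1 (Sum.inr false)
  rw [one_mul, Psi_one] at h1
  rw [h1, FL_inr, tau_apply, dZ_val_ft0 H m s₀ hs₀ (qh_one_zero H m s₀ hs₀), zpow_neg, zpow_one]
  exact one_mul _

theorem Phi_mem_star {u : RAACH H m} (hu : u ∈ Sstar H m) :
    Phi H m s₀ hs₀ u ∈ Sstar (newGraph H s₀ false) (newM m s₀) := by
  obtain ⟨s, rfl | rfl⟩ := hu
  · by_cases hs : s = s₀
    · rw [hs, Phi_gen_s0]
      exact ⟨Sum.inr true, Or.inl rfl⟩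
    · rw [Phi_gen_ne H m s₀ hs₀ hs]
      exact ⟨Sum.inl ⟨s, hs⟩, Or.inl rfl⟩
  · by_cases hs : s = s₀
    · rw [hs, Phi_inv_gen_s0]
      exact ⟨Sum.inr false, Or.inl rfl⟩
    · rw [Phi_inv_gen_ne H m s₀ hs₀ hs]
      exact ⟨Sum.inl ⟨s, hs⟩, Or.inr rfl⟩

theorem Psi_mem_star {u : RAACH (newGraph H s₀ false) (newM m s₀)}
    (hu : u ∈ Sstar (newGraph H s₀ false) (newM m s₀)) :
    Psi H m s₀ hs₀ u ∈ Sstar H m := by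
  obtain ⟨v, rfl | rfl⟩ := hu
  · cases v with
    | inl a => rw [Psi_gen_inl]; exact ⟨a.1, Or.inl rfl⟩
    | inr b =>
      cases b
      · rw [Psi_gen_inr_false]; exact ⟨s₀, Or.inr rfl⟩
      · rw [Psi_gen_inr_true]; exact ⟨s₀, Or.inl rfl⟩
  · cases v with
    | inl a => rw [Psi_inv_gen_inl]; exact ⟨a.1, Or.inr rfl⟩
    | inr b =>
      rw [show (raachGen (newGraph H s₀ false) (newM m s₀) (Sum.inr b))⁻¹ =
        raachGen (newGraph H s₀ false) (newM m s₀) (Sum.inr b) from gB_inv H m s₀ b]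
      cases b
      · rw [Psi_gen_inr_false]; exact ⟨s₀, Or.inr rfl⟩
      · rw [Psi_gen_inr_true]; exact ⟨s₀, Or.inl rfl⟩

/-- The bijection between the symmetrized generating sets. -/
noncomputable def phiStar : (Sstar H m) ≃ (Sstar (newGraph H s₀ false) (newM m s₀)) where
  toFun u := ⟨Phi H m s₀ hs₀ u.1, Phi_mem_star H m s₀ hs₀ u.2⟩
  invFun v := ⟨Psi H m s₀ hs₀ v.1, Psi_mem_star H m s₀ hs₀ v.2⟩
  left_inv u := Subtype.ext (Psi_Phi H m s₀ hs₀ u.1)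
  right_inv v := Subtype.ext (Phi_Psi H m s₀ hs₀ v.1)

/-! Spec-transfer lemmas, with explicit classical `if`. -/

end Transfer

/-- `if` with the classical decidability instance (matching `apWeight`). -/
noncomputable def cif (c : Prop) (a b : ℕ) : ℕ := @ite ℕ c (Classical.propDecidable c) a b

theorem cif_pos {c : Prop} (h : c) {a b : ℕ} : cif c a b = a := if_pos h

theorem cif_neg {c : Prop} (h : ¬ c) {a b : ℕ} : cif c a b = b := if_neg h

/-- `apWeight` on (positive, positive) generator pairs. -/
theorem apW_tt {H : SimpleGraph S} {m : S → ℕ∞}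
    (hm : ∀ u, m u = 2 ∨ m u = 3 ∨ m u = 4 ∨ m u = (⊤ : ℕ∞)) (s t : S) :
    apWeight H m (raachGen H m s) (raachGen H m t) =
      cif (s = t) 0 (cif (H.Adj s t) 1 0) := by
  rw [show raachGen H m s = gsgn true (raachGen H m s) from (gsgn_true _).symm,
    show raachGen H m t = gsgn true (raachGen H m t) from (gsgn_true _).symm,
    apWeight_gen hm]
  by_cases hst : s = t
  · rw [if_pos hst, cif_pos hst, if_neg (by simp : ¬ (m s = 4 ∧ (true : Bool) ≠ true)),
      if_neg (by simp : ¬ (m s = 3 ∧ (true : Bool) ≠ true))]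
  · rw [if_neg hst, cif_neg hst]
    by_cases hadj : H.Adj s t
    · rw [if_pos hadj, cif_pos hadj]
    · rw [if_neg hadj, cif_neg hadj]

theorem apW_ff {H : SimpleGraph S} {m : S → ℕ∞}
    (hm : ∀ u, m u = 2 ∨ m u = 3 ∨ m u = 4 ∨ m u = (⊤ : ℕ∞)) (s t : S) :
    apWeight H m ((raachGen H m s)⁻¹) ((raachGen H m t)⁻¹) =
      cif (s = t) 0 (cif (H.Adj s t) 1 0) := by
  rw [show (raachGen H m s)⁻¹ = gsgn false (raachGen H m s) from (gsgn_false _).symm,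
    show (raachGen H m t)⁻¹ = gsgn false (raachGen H m t) from (gsgn_false _).symm,
    apWeight_gen hm]
  by_cases hst : s = t
  · rw [if_pos hst, cif_pos hst, if_neg (by simp : ¬ (m s = 4 ∧ (false : Bool) ≠ false)),
      if_neg (by simp : ¬ (m s = 3 ∧ (false : Bool) ≠ false))]
  · rw [if_neg hst, cif_neg hst]
    by_cases hadj : H.Adj s t
    · rw [if_pos hadj, cif_pos hadj]
    · rw [if_neg hadj, cif_neg hadj]

theorem apW_tf {H : SimpleGraph S} {m : S → ℕ∞}
    (hm : ∀ u, m u = 2 ∨ m u = 3 ∨ m u = 4 ∨ m u = (⊤ : ℕ∞)) (s t : S) :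
    apWeight H m (raachGen H m s) ((raachGen H m t)⁻¹) =
      cif (s = t) (cif (m s = 4) 1 (cif (m s = 3) 2 0)) (cif (H.Adj s t) 1 0) := by
  rw [show raachGen H m s = gsgn true (raachGen H m s) from (gsgn_true _).symm,
    show (raachGen H m t)⁻¹ = gsgn false (raachGen H m t) from (gsgn_false _).symm,
    apWeight_gen hm]
  by_cases hst : s = t
  · rw [if_pos hst, cif_pos hst]
    by_cases h4 : m s = 4
    · rw [if_pos ⟨h4, by simp⟩, cif_pos h4]
    · rw [if_neg (fun hc => h4 hc.1), cif_neg h4]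
      by_cases h3 : m s = 3
      · rw [if_pos ⟨h3, by simp⟩, cif_pos h3]
      · rw [if_neg (fun hc => h3 hc.1), cif_neg h3]
  · rw [if_neg hst, cif_neg hst]
    by_cases hadj : H.Adj s t
    · rw [if_pos hadj, cif_pos hadj]
    · rw [if_neg hadj, cif_neg hadj]

theorem apW_ft {H : SimpleGraph S} {m : S → ℕ∞}
    (hm : ∀ u, m u = 2 ∨ m u = 3 ∨ m u = 4 ∨ m u = (⊤ : ℕ∞)) (s t : S) :
    apWeight H m ((raachGen H m s)⁻¹) (raachGen H m t) =
      cif (s = t) (cif (m s = 4) 1 (cif (m s = 3) 2 0)) (cif (H.Adj s t) 1 0) := by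
  rw [show (raachGen H m s)⁻¹ = gsgn false (raachGen H m s) from (gsgn_false _).symm,
    show raachGen H m t = gsgn true (raachGen H m t) from (gsgn_true _).symm,
    apWeight_gen hm]
  by_cases hst : s = t
  · rw [if_pos hst, cif_pos hst]
    by_cases h4 : m s = 4
    · rw [if_pos ⟨h4, by simp⟩, cif_pos h4]
    · rw [if_neg (fun hc => h4 hc.1), cif_neg h4]
      by_cases h3 : m s = 3
      · rw [if_pos ⟨h3, by simp⟩, cif_pos h3]
      · rw [if_neg (fun hc => h3 hc.1), cif_neg h3]
  · rw [if_neg hst, cif_neg hst]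
    by_cases hadj : H.Adj s t
    · rw [if_pos hadj, cif_pos hadj]
    · rw [if_neg hadj, cif_neg hadj]

section Transfer2

variable (H : SimpleGraph S) (m : S → ℕ∞) (s₀ : S) (hs₀ : m s₀ = (⊤ : ℕ∞))

theorem T1 {s t : S} (hss : s ≠ s₀) (hts : t ≠ s₀) (n1 n2 : ℕ) (h12 : s = t → n1 = n2) :
    cif ((Sum.inl ⟨s, hss⟩ : newVerts S s₀) = Sum.inl ⟨t, hts⟩) n1
      (cif ((newGraph H s₀ false).Adj (Sum.inl ⟨s, hss⟩) (Sum.inl ⟨t, hts⟩)) 1 0) =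
    cif (s = t) n2 (cif (H.Adj s t) 1 0) := by
  by_cases hst : s = t
  · rw [cif_pos (show (Sum.inl ⟨s, hss⟩ : newVerts S s₀) = Sum.inl ⟨t, hts⟩ by
      subst hst; rfl), cif_pos hst, h12 hst]
  · rw [cif_neg (fun e => hst (by injection e with e2; exact congrArg Subtype.val e2)),
      cif_neg hst]
    by_cases hadj : H.Adj s t
    · rw [cif_pos ((adj_inl_inl H s₀ false ⟨s, hss⟩ ⟨t, hts⟩).mpr hadj), cif_pos hadj]
    · rw [cif_neg (fun h => hadj ((adj_inl_inl H s₀ false ⟨s, hss⟩ ⟨t, hts⟩).mp h)),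
        cif_neg hadj]

theorem T2 {s : S} (hss : s ≠ s₀) (c : Bool) (n1 n2 : ℕ) :
    cif ((Sum.inl ⟨s, hss⟩ : newVerts S s₀) = Sum.inr c) n1
      (cif ((newGraph H s₀ false).Adj (Sum.inl ⟨s, hss⟩) (Sum.inr c)) 1 0) =
    cif (s = s₀) n2 (cif (H.Adj s s₀) 1 0) := by
  rw [cif_neg (by simp : ¬ (Sum.inl ⟨s, hss⟩ : newVerts S s₀) = Sum.inr c), cif_neg hss]
  by_cases hadj : H.Adj s s₀
  · rw [cif_pos ((adj_inl_inr H s₀ false ⟨s, hss⟩ c).mpr hadj.symm), cif_pos hadj]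
  · rw [cif_neg (fun h => hadj ((adj_inl_inr H s₀ false ⟨s, hss⟩ c).mp h).symm), cif_neg hadj]

theorem T3 {t : S} (hts : t ≠ s₀) (c : Bool) (n1 n2 : ℕ) :
    cif ((Sum.inr c : newVerts S s₀) = Sum.inl ⟨t, hts⟩) n1
      (cif ((newGraph H s₀ false).Adj (Sum.inr c) (Sum.inl ⟨t, hts⟩)) 1 0) =
    cif (s₀ = t) n2 (cif (H.Adj s₀ t) 1 0) := by
  rw [cif_neg (by simp : ¬ (Sum.inr c : newVerts S s₀) = Sum.inl ⟨t, hts⟩),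
    cif_neg (show ¬ s₀ = t from fun e => hts e.symm)]
  by_cases hadj : H.Adj s₀ t
  · rw [cif_pos ((adj_inr_inl H s₀ false c ⟨t, hts⟩).mpr hadj), cif_pos hadj]
  · rw [cif_neg (fun h => hadj ((adj_inr_inl H s₀ false c ⟨t, hts⟩).mp h)), cif_neg hadj]

theorem T4 (c1 c2 : Bool) (n1 n2 : ℕ) (h1 : n1 = 0) (h2 : n2 = 0) :
    cif ((Sum.inr c1 : newVerts S s₀) = Sum.inr c2) n1
      (cif ((newGraph H s₀ false).Adj (Sum.inr c1) (Sum.inr c2)) 1 0) =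
    cif (s₀ = s₀) n2 (cif (H.Adj s₀ s₀) 1 0) := by
  rw [cif_pos rfl, h2]
  by_cases hc : c1 = c2
  · rw [cif_pos (by rw [hc]), h1]
  · rw [cif_neg (fun e => hc (by injection e)), cif_neg (adj_inr_inr H s₀ c1 c2)]

theorem m_s0_w0 (hstop : m s₀ = (⊤ : ℕ∞)) : cif (m s₀ = 4) 1 (cif (m s₀ = 3) 2 0) = 0 := by
  rw [cif_neg (fun e => (by simp : (⊤:ℕ∞) ≠ 4) (hstop ▸ e)),
    cif_neg (fun e => (by simp : (⊤:ℕ∞) ≠ 3) (hstop ▸ e))]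

theorem weight_transfer (hm : ∀ s, m s = 2 ∨ m s = 3 ∨ m s = 4 ∨ m s = (⊤ : ℕ∞))
    {u v : RAACH H m} (hu : u ∈ Sstar H m) (hv : v ∈ Sstar H m) :
    apWeight (newGraph H s₀ false) (newM m s₀) (Phi H m s₀ hs₀ u) (Phi H m s₀ hs₀ v) =
      apWeight H m u v := by
  have hmn := hm_new m s₀ hm
  obtain ⟨s, hs⟩ := hu
  obtain ⟨t, ht⟩ := hv
  rcases hs with rfl | rfl <;> rcases ht with rfl | rfl <;>
    by_cases hss : s = s₀ <;> by_cases hts : t = s₀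
  · rw [hss, hts, Phi_gen_s0]; erw [apW_tt hmn]; rw [apW_tt hm]
    exact T4 H s₀ true true 0 0 rfl rfl
  · rw [hss, Phi_gen_s0, Phi_gen_ne H m s₀ hs₀ hts]; erw [apW_tt hmn]; rw [apW_tt hm]
    exact T3 H s₀ hts true 0 0
  · rw [hts, Phi_gen_s0, Phi_gen_ne H m s₀ hs₀ hss]; erw [apW_tt hmn]; rw [apW_tt hm]
    exact T2 H s₀ hss true 0 0
  · rw [Phi_gen_ne H m s₀ hs₀ hss, Phi_gen_ne H m s₀ hs₀ hts]; erw [apW_tt hmn]; rw [apW_tt hm]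
    exact T1 H s₀ hss hts 0 0 (fun _ => rfl)
  · rw [hss, hts, Phi_gen_s0, Phi_inv_gen_s0]; erw [apW_tt hmn]; rw [apW_tf hm]
    exact T4 H s₀ true false 0 _ rfl (m_s0_w0 m s₀ hs₀)
  · rw [hss, Phi_gen_s0, Phi_inv_gen_ne H m s₀ hs₀ hts]; erw [apW_tf hmn]; rw [apW_tf hm]
    exact T3 H s₀ hts true _ _
  · rw [hts, Phi_inv_gen_s0, Phi_gen_ne H m s₀ hs₀ hss]; erw [apW_tt hmn]; rw [apW_tf hm]
    exact T2 H s₀ hss false 0 _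
  · rw [Phi_gen_ne H m s₀ hs₀ hss, Phi_inv_gen_ne H m s₀ hs₀ hts]; erw [apW_tf hmn]; rw [apW_tf hm]
    exact T1 H s₀ hss hts _ _ (fun _ => rfl)
  · rw [hss, hts, Phi_inv_gen_s0, Phi_gen_s0]; erw [apW_tt hmn]; rw [apW_ft hm]
    exact T4 H s₀ false true 0 _ rfl (m_s0_w0 m s₀ hs₀)
  · rw [hss, Phi_inv_gen_s0, Phi_gen_ne H m s₀ hs₀ hts]; erw [apW_tt hmn]; rw [apW_ft hm]
    exact T3 H s₀ hts false 0 _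
  · rw [hts, Phi_gen_s0, Phi_inv_gen_ne H m s₀ hs₀ hss]; erw [apW_ft hmn]; rw [apW_ft hm]
    exact T2 H s₀ hss true _ _
  · rw [Phi_inv_gen_ne H m s₀ hs₀ hss, Phi_gen_ne H m s₀ hs₀ hts]; erw [apW_ft hmn]; rw [apW_ft hm]
    exact T1 H s₀ hss hts _ _ (fun _ => rfl)
  · rw [hss, hts, Phi_inv_gen_s0]; erw [apW_tt hmn]; rw [apW_ff hm]
    exact T4 H s₀ false false 0 0 rfl rfl
  · rw [hss, Phi_inv_gen_s0, Phi_inv_gen_ne H m s₀ hs₀ hts]; erw [apW_tf hmn]; rw [apW_ff hm]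
    exact T3 H s₀ hts false _ 0
  · rw [hts, Phi_inv_gen_s0, Phi_inv_gen_ne H m s₀ hs₀ hss]; erw [apW_ft hmn]; rw [apW_ff hm]
    exact T2 H s₀ hss false _ 0
  · rw [Phi_inv_gen_ne H m s₀ hs₀ hss, Phi_inv_gen_ne H m s₀ hs₀ hts]; erw [apW_ff hmn]; rw [apW_ff hm]
    exact T1 H s₀ hss hts 0 0 (fun _ => rfl)

end Transfer2


end RaachProof

/-- **Replacing an infinite-order generator by two non-commuting involutions.** The associated
pairs and the Cayley graphs of `Γ` and `Γ'` are isomorphic (weights being preserved). -/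
theorem replace_Rinf_generator {S : Type} [Fintype S] (H : SimpleGraph S) (m : S → ℕ∞)
    (hm : ∀ s, m s = 2 ∨ m s = 3 ∨ m s = 4 ∨ m s = (⊤ : ℕ∞))
    (s₀ : S) (hs₀ : m s₀ = (⊤ : ℕ∞)) :
    (∃ φ : (Sstar H m) ≃ (Sstar (newGraph H s₀ false) (newM m s₀)),
        ∀ s t : Sstar H m,
          apWeight (newGraph H s₀ false) (newM m s₀) (φ s).1 (φ t).1 =
            apWeight H m s.1 t.1) ∧
      Nonempty (cayRAACH H m ≃g cayRAACH (newGraph H s₀ false) (newM m s₀)) := by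
  constructor
  · refine ⟨RaachProof.phiStar H m s₀ hs₀, ?_⟩
    intro u v
    exact RaachProof.weight_transfer H m s₀ hs₀ hm u.2 v.2
  · exact ⟨RaachProof.cayIso H m s₀ hs₀⟩
end

section
/- Let Γ be a RAACH with defining graph (H,m) and G = Cay(Γ,S). If a, b, c ∈ Γ are such that e, a, b, c are pairwise distinct and e ∼ a, a ∼ b, b ∼ c, c ∼ e in G (a 4-cycle containing the identity e), then either there exists s ∈ S* with ord(s) = 4 and (a, b, c) = (s, s², s³), or there exist commuting s, t ∈ S* with t ∉ {s, s⁻¹} and (a, b, c) = (s, st, t). -/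
set_option linter.unusedVariables false

attribute [local instance] Classical.propDecidable

open scoped commutatorElement

namespace RaachAux

variable {S : Type} (H : SimpleGraph S) (m : S → ℕ∞)

def nn (m : S → ℕ∞) (x : S) : ℕ := (m x).toNat

lemma Sstar_inv {g : RAACH H m} (hg : g ∈ Sstar H m) : g⁻¹ ∈ Sstar H m := by
  obtain ⟨s, hs | hs⟩ := hg
  · exact ⟨s, Or.inr (by rw [hs])⟩
  · exact ⟨s, Or.inl (by rw [hs, inv_inv])⟩

lemma Sstar_zpow {g : RAACH H m} (hg : g ∈ Sstar H m) :
    ∃ (y : S) (ε : ℤ), (ε = 1 ∨ ε = -1) ∧ g = raachGen H m y ^ ε := by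
  obtain ⟨s, hs | hs⟩ := hg
  · exact ⟨s, 1, Or.inl rfl, by simpa using hs⟩
  · exact ⟨s, -1, Or.inr rfl, by simpa using hs⟩

lemma zpow_mem_Sstar (y : S) {ε : ℤ} (hε : ε = 1 ∨ ε = -1) :
    raachGen H m y ^ ε ∈ Sstar H m := by
  rcases hε with rfl | rfl
  · exact ⟨y, Or.inl (by simp)⟩
  · exact ⟨y, Or.inr (by simp)⟩

lemma gen_pow_eq_one {x : S} {k : ℕ} (hk : m x = (k : ℕ∞)) :
    raachGen H m x ^ k = 1 := by
  have hr : FreeGroup.of x ^ k ∈ raachRels H m := Or.inl ⟨x, k, hk, rfl⟩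
  have h1 : raachGen H m x ^ k
      = PresentedGroup.mk (raachRels H m) (FreeGroup.of x ^ k) := by
    rw [map_pow]; rfl
  rw [h1]
  exact (QuotientGroup.eq_one_iff _).mpr (Subgroup.subset_normalClosure hr)

noncomputable def phi (x : S) : RAACH H m →* Multiplicative (ZMod (nn m x)) :=
  PresentedGroup.toGroup
    (f := fun y => Multiplicative.ofAdd (if y = x then (1 : ZMod (nn m x)) else 0)) (by
    rintro r (⟨s, k, hk, rfl⟩ | ⟨s, t, hst, rfl⟩)
    · rw [map_pow, FreeGroup.lift_apply_of]
      by_cases hsx : s = x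
      · subst hsx
        rw [if_pos rfl, ← ofAdd_nsmul, nsmul_one]
        have hn : ((k : ℕ) : ZMod (nn m s)) = 0 := by
          have hkk : nn m s = k := by rw [nn, hk, ENat.toNat_coe]
          rw [hkk]; exact ZMod.natCast_self k
        rw [hn]; rfl
      · rw [if_neg hsx]; simp
    · rw [map_commutatorElement, FreeGroup.lift_apply_of, FreeGroup.lift_apply_of]
      exact commutatorElement_eq_one_iff_commute.mpr (mul_comm _ _))

noncomputable def psi (x : S) (g : RAACH H m) : ZMod (nn m x) :=
  Multiplicative.toAdd (phi H m x g)

lemma psi_mul (x : S) (g h : RAACH H m) :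
    psi H m x (g * h) = psi H m x g + psi H m x h := by
  simp [psi, map_mul]

lemma psi_one (x : S) : psi H m x 1 = 0 := by simp [psi]

lemma psi_gen_zpow (x y : S) (ε : ℤ) :
    psi H m x (raachGen H m y ^ ε)
      = ((ε * (if y = x then 1 else 0) : ℤ) : ZMod (nn m x)) := by
  have h1 : phi H m x (raachGen H m y)
      = Multiplicative.ofAdd (if y = x then (1 : ZMod (nn m x)) else 0) :=
    PresentedGroup.toGroup.of _
  rw [psi, map_zpow, h1, toAdd_zpow, toAdd_ofAdd]
  by_cases hyx : y = x
  · rw [if_pos hyx, if_pos hyx, mul_one, zsmul_one]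
  · rw [if_neg hyx, if_neg hyx, smul_zero, mul_zero, Int.cast_zero]

lemma zpow_one_dvd {x : S} {k : ℤ} (h : raachGen H m x ^ k = 1) :
    (nn m x : ℤ) ∣ k := by
  have h0 := congrArg (psi H m x) h
  rw [psi_gen_zpow, psi_one, if_pos rfl, mul_one] at h0
  exact (ZMod.intCast_zmod_eq_zero_iff_dvd _ _).mp h0

lemma rel_dvd {y1 y2 y3 y4 : S} {ε1 ε2 ε3 ε4 : ℤ}
    (R : raachGen H m y1 ^ ε1 * raachGen H m y2 ^ ε2 * raachGen H m y3 ^ ε3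
        * raachGen H m y4 ^ ε4 = 1) (x : S) :
    (nn m x : ℤ) ∣ (ε1 * (if y1 = x then 1 else 0) + ε2 * (if y2 = x then 1 else 0)
      + ε3 * (if y3 = x then 1 else 0) + ε4 * (if y4 = x then 1 else 0)) := by
  have h0 := congrArg (psi H m x) R
  rw [psi_mul, psi_mul, psi_mul, psi_one, psi_gen_zpow, psi_gen_zpow, psi_gen_zpow,
    psi_gen_zpow, ← Int.cast_add, ← Int.cast_add, ← Int.cast_add] at h0
  exact (ZMod.intCast_zmod_eq_zero_iff_dvd _ _).mp h0

lemma eq_dvd {y z : S} {ε δ : ℤ}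
    (h : raachGen H m y ^ ε = raachGen H m z ^ δ) (x : S) :
    (nn m x : ℤ) ∣ (ε * (if y = x then 1 else 0) - δ * (if z = x then 1 else 0)) := by
  have h0 := congrArg (psi H m x) h
  rw [psi_gen_zpow, psi_gen_zpow] at h0
  have h1 : ((ε * (if y = x then 1 else 0) - δ * (if z = x then 1 else 0) : ℤ)
      : ZMod (nn m x)) = 0 := by
    rw [Int.cast_sub, h0, sub_self]
  exact (ZMod.intCast_zmod_eq_zero_iff_dvd _ _).mp h1

lemma nn_cases {x : S} (hmx : m x = 2 ∨ m x = 3 ∨ m x = 4 ∨ m x = (⊤ : ℕ∞)) :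
    nn m x = 2 ∨ nn m x = 3 ∨ nn m x = 4 ∨ nn m x = 0 := by
  rcases hmx with h | h | h | h <;> rw [nn, h] <;> simp

lemma no_single {x : S} (hmx : m x = 2 ∨ m x = 3 ∨ m x = 4 ∨ m x = (⊤ : ℕ∞))
    {ε : ℤ} (hε : ε = 1 ∨ ε = -1) (h : (nn m x : ℤ) ∣ ε) : False := by
  rcases nn_cases m hmx with hn | hn | hn | hn <;> rw [hn] at h <;>
    rcases hε with rfl | rfl <;> omega

lemma sq_eq_one_of_nn2 {x : S} (hmx : m x = 2 ∨ m x = 3 ∨ m x = 4 ∨ m x = (⊤ : ℕ∞))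
    (hn2 : nn m x = 2) : raachGen H m x ^ (2 : ℤ) = 1 := by
  have hm2 : m x = ((2 : ℕ) : ℕ∞) := by
    rcases hmx with h | h | h | h
    · rw [h]; rfl
    all_goals (exfalso; rw [nn, h] at hn2; simp at hn2)
  have := gen_pow_eq_one H m hm2
  rw [show (2 : ℤ) = ((2 : ℕ) : ℤ) from rfl, zpow_natCast, this]

lemma m_eq_four_of_nn4 {x : S} (hmx : m x = 2 ∨ m x = 3 ∨ m x = 4 ∨ m x = (⊤ : ℕ∞))
    (hn4 : nn m x = 4) : m x = ((4 : ℕ) : ℕ∞) := by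
  rcases hmx with h | h | h | h
  · exfalso; rw [nn, h] at hn4; simp at hn4
  · exfalso; rw [nn, h] at hn4; simp at hn4
  · rw [h]; rfl
  · exfalso; rw [nn, h] at hn4; simp at hn4

lemma pair_inv {x : S} (hmx : m x = 2 ∨ m x = 3 ∨ m x = 4 ∨ m x = (⊤ : ℕ∞))
    {ε δ : ℤ} (hε : ε = 1 ∨ ε = -1) (hδ : δ = 1 ∨ δ = -1)
    (h : (nn m x : ℤ) ∣ (ε + δ)) :
    raachGen H m x ^ δ = (raachGen H m x ^ ε)⁻¹ := by
  by_cases hde : δ = -ε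
  · rw [hde, zpow_neg]
  · have hde' : δ = ε := by rcases hε with rfl | rfl <;> rcases hδ with rfl | rfl <;> omega
    subst hde'
    have hn2 : nn m x = 2 := by
      rcases nn_cases m hmx with hn | hn | hn | hn
      · exact hn
      all_goals (rw [hn] at h; rcases hε with rfl | rfl <;> omega)
    have hsq := sq_eq_one_of_nn2 H m hmx hn2
    have hmul : raachGen H m x ^ δ * raachGen H m x ^ δ = 1 := by
      rw [← zpow_add, show δ + δ = 2 * δ by ring, zpow_mul, hsq, one_zpow]
    exact eq_inv_of_mul_eq_one_left hmul

lemma order_four {x : S} (hm4 : m x = ((4 : ℕ) : ℕ∞)) (hn4 : nn m x = 4) :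
    orderOf (raachGen H m x) = 4 := by
  have h4 : raachGen H m x ^ (4 : ℕ) = 1 := gen_pow_eq_one H m hm4
  have h2 : ¬ raachGen H m x ^ ((2 : ℕ) : ℕ) = 1 := by
    intro hq
    have hz : raachGen H m x ^ ((2 : ℕ) : ℤ) = 1 := by rw [zpow_natCast, hq]
    have hd := zpow_one_dvd H m hz
    rw [hn4] at hd; omega
  have : Fact (Nat.Prime 2) := ⟨by norm_num⟩
  have := orderOf_eq_prime_pow (x := raachGen H m x) (p := 2) (n := 1)
    (by simpa using h2) (by simpa using h4)
  simpa using this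

end RaachAux

/-- **Squares in the Cayley graph of a RAACH.** Any 4-cycle through the identity is either of
the form `e, s, s², s³` with `s ∈ S*` of order 4, or of the form `e, s, st, t` with commuting
`s, t ∈ S*`, `t ∉ {s, s⁻¹}`. -/
theorem raach_four_cycles {S : Type} [Fintype S] (H : SimpleGraph S) (m : S → ℕ∞)
    (hm : ∀ s, m s = 2 ∨ m s = 3 ∨ m s = 4 ∨ m s = (⊤ : ℕ∞))
    (a b c : RAACH H m) (hb : b ≠ 1) (hac : a ≠ c)
    (h1 : (cayRAACH H m).Adj 1 a) (h2 : (cayRAACH H m).Adj a b)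
    (h3 : (cayRAACH H m).Adj b c) (h4 : (cayRAACH H m).Adj c 1) :
    (∃ s ∈ Sstar H m, orderOf s = 4 ∧ a = s ∧ b = s ^ 2 ∧ c = s ^ 3) ∨
    (∃ s ∈ Sstar H m, ∃ t ∈ Sstar H m,
      Commute s t ∧ t ≠ s ∧ t ≠ s⁻¹ ∧ a = s ∧ b = s * t ∧ c = t) := by
  have hmem : ∀ {x y : RAACH H m}, (cayRAACH H m).Adj x y → x⁻¹ * y ∈ Sstar H m := by
    intro x y hxy
    rcases hxy.2 with h | h
    · exact h
    · have := RaachAux.Sstar_inv H m h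
      simpa using this
  have ha : a ∈ Sstar H m := by simpa using hmem h1
  have hu : a⁻¹ * b ∈ Sstar H m := hmem h2
  have hv : b⁻¹ * c ∈ Sstar H m := hmem h3
  have hcinv : c⁻¹ ∈ Sstar H m := by simpa using hmem h4
  obtain ⟨y1, ε1, hε1, hl1⟩ := RaachAux.Sstar_zpow H m ha
  obtain ⟨y2, ε2, hε2, hl2⟩ := RaachAux.Sstar_zpow H m hu
  obtain ⟨y3, ε3, hε3, hl3⟩ := RaachAux.Sstar_zpow H m hv
  obtain ⟨y4, ε4, hε4, hl4⟩ := RaachAux.Sstar_zpow H m hcinv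
  have hb' : b = raachGen H m y1 ^ ε1 * raachGen H m y2 ^ ε2 := by
    rw [← hl1, ← hl2]; group
  have hc3 : c = raachGen H m y1 ^ ε1 * raachGen H m y2 ^ ε2 * raachGen H m y3 ^ ε3 := by
    rw [← hl1, ← hl2, ← hl3]; group
  have hc4 : c = (raachGen H m y4 ^ ε4)⁻¹ := by
    rw [← hl4]; simp
  have R : raachGen H m y1 ^ ε1 * raachGen H m y2 ^ ε2 * raachGen H m y3 ^ ε3
      * raachGen H m y4 ^ ε4 = 1 := by
    rw [← hl1, ← hl2, ← hl3, ← hl4]; group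
  by_cases e2 : y2 = y1
  · rw [e2] at R hb' hc3
    by_cases e3 : y3 = y1
    · rw [e3] at R hc3
      by_cases e4 : y4 = y1
      · -- Case A : all letters on generator y1
        rw [e4] at R hc4
        have D1 := RaachAux.rel_dvd H m R y1
        simp only [if_pos rfl, eq_self_iff_true, if_true, mul_one] at D1
        by_cases s2 : ε2 = -ε1
        · exact absurd (show b = 1 by rw [hb', s2]; group) hb
        · have s2' : ε2 = ε1 := by rcases hε1 with rfl | rfl <;> rcases hε2 with rfl | rfl <;> omega
          rw [s2'] at D1 hb' hc3
          by_cases s3 : ε3 = -ε1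
          · exact absurd (show a = c by rw [hl1, hc3, s3]; group) hac
          · have s3' : ε3 = ε1 := by
              rcases hε1 with rfl | rfl <;> rcases hε3 with rfl | rfl <;> omega
            rw [s3'] at D1 hc3
            by_cases s4 : ε4 = -ε1
            · rw [s4] at D1
              exfalso
              have hn2 : RaachAux.nn m y1 = 2 := by
                rcases RaachAux.nn_cases m (hm y1) with hn | hn | hn | hn
                · exact hn
                all_goals (rw [hn] at D1; rcases hε1 with rfl | rfl <;> omega)
              have hsq := RaachAux.sq_eq_one_of_nn2 H m (hm y1) hn2
              apply hb
              rw [hb', ← zpow_add, show ε1 + ε1 = 2 * ε1 by ring, zpow_mul, hsq, one_zpow]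
            · have s4' : ε4 = ε1 := by
                rcases hε1 with rfl | rfl <;> rcases hε4 with rfl | rfl <;> omega
              rw [s4'] at D1 hc4
              rcases RaachAux.nn_cases m (hm y1) with hn | hn | hn | hn
              · exfalso
                have hsq := RaachAux.sq_eq_one_of_nn2 H m (hm y1) hn
                apply hb
                rw [hb', ← zpow_add, show ε1 + ε1 = 2 * ε1 by ring, zpow_mul, hsq, one_zpow]
              · exfalso; rw [hn] at D1; rcases hε1 with rfl | rfl <;> omega
              · left
                have hm4 := RaachAux.m_eq_four_of_nn4 m (hm y1) hn
                have ho : orderOf (raachGen H m y1) = 4 := RaachAux.order_four H m hm4 hn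
                have ho' : orderOf (raachGen H m y1 ^ ε1) = 4 := by
                  rcases hε1 with rfl | rfl
                  · simpa using ho
                  · rw [show ((-1 : ℤ)) = -(1 : ℤ) from rfl, zpow_neg, zpow_one, orderOf_inv]
                    exact ho
                refine ⟨raachGen H m y1 ^ ε1, RaachAux.zpow_mem_Sstar H m y1 hε1, ho', hl1,
                  ?_, ?_⟩
                · rw [hb']; group
                · rw [hc3]; group
              · exfalso; rw [hn] at D1; rcases hε1 with rfl | rfl <;> omega
      · -- y4 lonely
        exfalso
        have D4 := RaachAux.rel_dvd H m R y4
        simp only [if_pos rfl, eq_self_iff_true, if_true, if_neg (show ¬ y1 = y4 from fun h => e4 h.symm), mul_one,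
          mul_zero, add_zero, zero_add] at D4
        exact RaachAux.no_single m (hm y4) hε4 D4
    · by_cases e34 : y4 = y3
      · -- pair at positions 1,2 : b = 1
        rw [e34] at R hc4
        exfalso
        have D1 := RaachAux.rel_dvd H m R y1
        simp only [if_pos rfl, eq_self_iff_true, if_true, if_neg e3, mul_one, mul_zero, add_zero, zero_add] at D1
        have hp := RaachAux.pair_inv H m (hm y1) hε1 hε2 D1
        apply hb
        rw [hb', hp]; simp
      · -- y3 lonely
        exfalso
        have D3 := RaachAux.rel_dvd H m R y3
        simp only [if_pos rfl, eq_self_iff_true, if_true, if_neg (show ¬ y1 = y3 from fun h => e3 h.symm), if_neg e34,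
          mul_one, mul_zero, add_zero, zero_add] at D3
        exact RaachAux.no_single m (hm y3) hε3 D3
  · have e2' : ¬ y1 = y2 := fun h => e2 h.symm
    by_cases e3 : y3 = y1
    · rw [e3] at R hc3
      by_cases e4 : y4 = y1
      · -- y2 lonely
        rw [e4] at R hc4
        exfalso
        have D2 := RaachAux.rel_dvd H m R y2
        simp only [if_pos rfl, eq_self_iff_true, if_true, if_neg e2', mul_one, mul_zero, add_zero, zero_add] at D2
        exact RaachAux.no_single m (hm y2) hε2 D2
      · by_cases e42 : y4 = y2
        · -- interleaved : the commuting square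
          rw [e42] at R hc4
          have D1 := RaachAux.rel_dvd H m R y1
          simp only [if_pos rfl, eq_self_iff_true, if_true, if_neg e2, mul_one, mul_zero, add_zero, zero_add] at D1
          have D2 := RaachAux.rel_dvd H m R y2
          simp only [if_pos rfl, eq_self_iff_true, if_true, if_neg e2', mul_one, mul_zero, add_zero, zero_add] at D2
          have hp13 := RaachAux.pair_inv H m (hm y1) hε1 hε3 D1
          have hp24 := RaachAux.pair_inv H m (hm y2) hε2 hε4 D2
          have hcom : Commute (raachGen H m y1 ^ ε1) (raachGen H m y2 ^ ε2) := by
            apply commutatorElement_eq_one_iff_commute.mp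
            rw [commutatorElement_def, ← hp13, ← hp24]
            exact R
          right
          refine ⟨raachGen H m y1 ^ ε1, RaachAux.zpow_mem_Sstar H m y1 hε1,
            raachGen H m y2 ^ ε2, RaachAux.zpow_mem_Sstar H m y2 hε2, hcom, ?_, ?_, hl1, hb', ?_⟩
          · intro h
            have hd := RaachAux.eq_dvd H m h y1
            simp only [if_pos rfl, eq_self_iff_true, if_true, if_neg e2, mul_one, mul_zero, zero_sub] at hd
            rw [dvd_neg] at hd
            exact RaachAux.no_single m (hm y1) hε1 hd
          · intro h
            have h' : raachGen H m y2 ^ ε2 = raachGen H m y1 ^ (-ε1) := by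
              rw [h, zpow_neg]
            have hd := RaachAux.eq_dvd H m h' y1
            simp only [if_pos rfl, eq_self_iff_true, if_true, if_neg e2, mul_one, mul_zero, zero_sub, neg_neg] at hd
            exact RaachAux.no_single m (hm y1) hε1 hd
          · rw [hc4, hp24, inv_inv]
        · -- y4 lonely
          exfalso
          have D4 := RaachAux.rel_dvd H m R y4
          simp only [if_pos rfl, eq_self_iff_true, if_true, if_neg (show ¬ y1 = y4 from fun h => e4 h.symm),
            if_neg (show ¬ y2 = y4 from fun h => e42 h.symm), mul_one, mul_zero, add_zero,
            zero_add] at D4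
          exact RaachAux.no_single m (hm y4) hε4 D4
    · by_cases e4 : y4 = y1
      · rw [e4] at R hc4
        by_cases e32 : y3 = y2
        · -- pair at positions 2,3 : a = c
          rw [e32] at R hc3
          exfalso
          have D2 := RaachAux.rel_dvd H m R y2
          simp only [if_pos rfl, eq_self_iff_true, if_true, if_neg e2', mul_one, mul_zero, add_zero, zero_add] at D2
          have hp := RaachAux.pair_inv H m (hm y2) hε2 hε3 D2
          apply hac
          rw [hl1, hc3, hp]; simp
        · -- y2 lonely
          exfalso
          have D2 := RaachAux.rel_dvd H m R y2
          simp only [if_pos rfl, eq_self_iff_true, if_true, if_neg e2', if_neg e32, mul_one, mul_zero, add_zero,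
            zero_add] at D2
          exact RaachAux.no_single m (hm y2) hε2 D2
      · -- y1 lonely
        exfalso
        have D1 := RaachAux.rel_dvd H m R y1
        simp only [if_pos rfl, eq_self_iff_true, if_true, if_neg e2, if_neg e3, if_neg e4, mul_one, mul_zero, add_zero,
          zero_add] at D1
        exact RaachAux.no_single m (hm y1) hε1 D1
end

section
/- Let G = (V,E) be a connected locally finite simple graph with adjacent vertices x, y, and let ℓ, n ≥ 0. Suppose there are pairwise distinct vertices x₁,…,x_ℓ, u₁,…,u_n, y₁,…,y_ℓ, v₁,…,v_n, all distinct from x and y, such that the neighbours of x are exactly {y, x₁,…,x_ℓ, u₁,…,u_n} and the neighbours of y are exactly {x, y₁,…,y_ℓ, v₁,…,v_n}. Assume (i) d(xᵢ, yⱼ) = 3 for all i,j ∈ {1,…,ℓ}; (ii) d(xᵢ, vⱼ) = 3 and d(yᵢ, uⱼ) = 3 for all i ∈ {1,…,ℓ}, j ∈ {1,…,n}; (iii) uⱼ ∼ vⱼ for all j ∈ {1,…,n}. Then the Lin–Lu–Yau Ollivier Ricci curvature of the edge {x,y} with respect to the normalized Laplacian satisfies κ_LLY(x,y) = (2 − 2ℓ)/(n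 + ℓ + 1). -/
set_option linter.unusedVariables false
set_option maxHeartbeats 1000000

attribute [local instance] Classical.propDecidable

/-- The normalized Laplacian of a (locally finite) graph. -/
noncomputable def nlap {V : Type*} (G : SimpleGraph V) (f : V → ℝ) (x : V) : ℝ :=
  ((Nat.card (G.neighborSet x) : ℝ))⁻¹ * ∑ᶠ y, if G.Adj x y then f y - f x else 0

/-- `f` is 1-Lipschitz with respect to the graph distance of `G`. -/
def GLip {V : Type*} (G : SimpleGraph V) (f : V → ℝ) : Prop :=
  ∀ u v, |f u - f v| ≤ (G.dist u v : ℝ)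

/-- The Lin-Lu-Yau Ollivier Ricci curvature of the edge `{x, y}` with respect to the
normalized Laplacian, in the limit-free formulation of Münch-Wojciechowski. -/
noncomputable def kappaLLY {V : Type*} (G : SimpleGraph V) (x y : V) : ℝ :=
  sInf {r : ℝ | ∃ f : V → ℝ, GLip G f ∧ f y - f x = 1 ∧ r = nlap G f x - nlap G f y}

/-- Auxiliary computation of the normalized Laplacian from an explicit description of
the neighbourhood. -/
theorem nlap_formula {V : Type*} (G : SimpleGraph V) (ℓ n : ℕ)
    (a b : V) (ps : Fin ℓ → V) (qs : Fin n → V)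
    (hN : G.neighborSet a = {b} ∪ Set.range ps ∪ Set.range qs)
    (hpsi : Function.Injective ps) (hqsi : Function.Injective qs)
    (hpb : ∀ i, ps i ≠ b) (hqb : ∀ j, qs j ≠ b)
    (hpq : ∀ i j, ps i ≠ qs j) (f : V → ℝ) :
    nlap G f a = ((n : ℝ) + (ℓ : ℝ) + 1)⁻¹ *
      ((f b - f a) + (∑ i, (f (ps i) - f a)) + (∑ j, (f (qs j) - f a))) := by
  classical
  set s : Finset V := insert b (Finset.image ps Finset.univ ∪ Finset.image qs Finset.univ) with hs
  have hbmem : b ∉ Finset.image ps Finset.univ ∪ Finset.image qs Finset.univ := by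
    simp only [Finset.mem_union, Finset.mem_image, Finset.mem_univ, true_and, not_or, not_exists]
    exact ⟨fun i => hpb i, fun j => hqb j⟩
  have hdisj : Disjoint (Finset.image ps Finset.univ) (Finset.image qs Finset.univ) := by
    rw [Finset.disjoint_left]
    rintro w hw hw'
    simp only [Finset.mem_image, Finset.mem_univ, true_and] at hw hw'
    obtain ⟨i, hi⟩ := hw; obtain ⟨j, hj⟩ := hw'
    exact hpq i j (hi.trans hj.symm)
  have hscoe : (↑s : Set V) = G.neighborSet a := by
    rw [hN]; ext w
    simp only [hs, Finset.coe_insert, Set.mem_insert_iff, Finset.coe_union, Set.mem_union,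
      Finset.coe_image, Finset.coe_univ, Set.image_univ, Set.mem_range, Set.mem_singleton_iff]
    tauto
  have hcard : s.card = ℓ + n + 1 := by
    rw [hs, Finset.card_insert_of_notMem hbmem, Finset.card_union_of_disjoint hdisj,
      Finset.card_image_of_injective _ hpsi, Finset.card_image_of_injective _ hqsi]
    simp [Finset.card_univ]
  have hcard' : (Nat.card (G.neighborSet a) : ℝ) = (n : ℝ) + (ℓ : ℝ) + 1 := by
    rw [← hscoe, Nat.card_coe_set_eq, Set.ncard_coe_finset, hcard]
    push_cast; ring
  have hsupp : Function.support (fun w => if G.Adj a w then f w - f a else 0) ⊆ ↑s := by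
    intro w hw
    rw [hscoe]
    by_contra hcon
    have hna : ¬ G.Adj a w := fun h => hcon h
    simp [Function.mem_support, hna] at hw
  have hsum : (∑ᶠ w, if G.Adj a w then f w - f a else 0) = ∑ w ∈ s, (f w - f a) := by
    rw [finsum_eq_sum_of_support_subset _ hsupp]
    refine Finset.sum_congr rfl fun w hw => ?_
    have : w ∈ G.neighborSet a := by rw [← hscoe]; exact Finset.mem_coe.2 hw
    exact if_pos this
  have hsum2 : ∑ w ∈ s, (f w - f a)
      = (f b - f a) + ((∑ i, (f (ps i) - f a)) + (∑ j, (f (qs j) - f a))) := by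
    rw [hs, Finset.sum_insert hbmem, Finset.sum_union hdisj,
      Finset.sum_image (fun i _ j _ h => hpsi h), Finset.sum_image (fun i _ j _ h => hqsi h)]
  simp only [nlap]
  rw [hcard', hsum, hsum2]
  ring

/-- **Ollivier Ricci curvature from the local structure of an edge (no common triangle).**
If the neighbourhoods of the adjacent vertices `x`, `y` are as in Figure 1 of the paper
(without a common neighbour `z`), then `κ_LLY(x,y) = (2 - 2ℓ)/(n + ℓ + 1)`. -/
theorem kappa_of_local_structure {V : Type*} (G : SimpleGraph V)
    (hconn : G.Connected) (hlf : G.LocallyFinite)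
    (x y : V) (hxy : G.Adj x y) (ℓ n : ℕ)
    (xs : Fin ℓ → V) (us : Fin n → V) (ys : Fin ℓ → V) (vs : Fin n → V)
    (hinj : Function.Injective (Sum.elim xs (Sum.elim us (Sum.elim ys vs))))
    (hnex : ∀ p, Sum.elim xs (Sum.elim us (Sum.elim ys vs)) p ≠ x)
    (hney : ∀ p, Sum.elim xs (Sum.elim us (Sum.elim ys vs)) p ≠ y)
    (hNx : G.neighborSet x = {y} ∪ Set.range xs ∪ Set.range us)
    (hNy : G.neighborSet y = {x} ∪ Set.range ys ∪ Set.range vs)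
    (hd1 : ∀ i j, G.dist (xs i) (ys j) = 3)
    (hd2 : ∀ i j, G.dist (xs i) (vs j) = 3)
    (hd3 : ∀ i j, G.dist (ys i) (us j) = 3)
    (hd4 : ∀ j, G.Adj (us j) (vs j)) :
    kappaLLY G x y = (2 - 2 * (ℓ : ℝ)) / ((n : ℝ) + (ℓ : ℝ) + 1) := by
  classical
  -- distinctness facts
  have hxs_x : ∀ i, xs i ≠ x := fun i => hnex (Sum.inl i)
  have hus_x : ∀ j, us j ≠ x := fun j => hnex (Sum.inr (Sum.inl j))
  have hys_x : ∀ i, ys i ≠ x := fun i => hnex (Sum.inr (Sum.inr (Sum.inl i)))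
  have hvs_x : ∀ j, vs j ≠ x := fun j => hnex (Sum.inr (Sum.inr (Sum.inr j)))
  have hxs_y : ∀ i, xs i ≠ y := fun i => hney (Sum.inl i)
  have hus_y : ∀ j, us j ≠ y := fun j => hney (Sum.inr (Sum.inl j))
  have hys_y : ∀ i, ys i ≠ y := fun i => hney (Sum.inr (Sum.inr (Sum.inl i)))
  have hvs_y : ∀ j, vs j ≠ y := fun j => hney (Sum.inr (Sum.inr (Sum.inr j)))
  have hxs_inj : Function.Injective xs := fun i j h => by
    have := hinj (a₁ := Sum.inl i) (a₂ := Sum.inl j) h; simpa using this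
  have hus_inj : Function.Injective us := fun i j h => by
    have := hinj (a₁ := Sum.inr (Sum.inl i)) (a₂ := Sum.inr (Sum.inl j)) h; simpa using this
  have hys_inj : Function.Injective ys := fun i j h => by
    have := hinj (a₁ := Sum.inr (Sum.inr (Sum.inl i))) (a₂ := Sum.inr (Sum.inr (Sum.inl j))) h
    simpa using this
  have hvs_inj : Function.Injective vs := fun i j h => by
    have := hinj (a₁ := Sum.inr (Sum.inr (Sum.inr i))) (a₂ := Sum.inr (Sum.inr (Sum.inr j))) h
    simpa using this
  have hxs_us : ∀ i j, xs i ≠ us j := fun i j h => by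
    have := hinj (a₁ := Sum.inl i) (a₂ := Sum.inr (Sum.inl j)) h; simp at this
  have hxs_ys : ∀ i j, xs i ≠ ys j := fun i j h => by
    have := hinj (a₁ := Sum.inl i) (a₂ := Sum.inr (Sum.inr (Sum.inl j))) h; simp at this
  have hxs_vs : ∀ i j, xs i ≠ vs j := fun i j h => by
    have := hinj (a₁ := Sum.inl i) (a₂ := Sum.inr (Sum.inr (Sum.inr j))) h; simp at this
  have hus_ys : ∀ i j, us i ≠ ys j := fun i j h => by
    have := hinj (a₁ := Sum.inr (Sum.inl i)) (a₂ := Sum.inr (Sum.inr (Sum.inl j))) h; simp at this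
  have hus_vs : ∀ i j, us i ≠ vs j := fun i j h => by
    have := hinj (a₁ := Sum.inr (Sum.inl i)) (a₂ := Sum.inr (Sum.inr (Sum.inr j))) h; simp at this
  have hys_vs : ∀ i j, ys i ≠ vs j := fun i j h => by
    have := hinj (a₁ := Sum.inr (Sum.inr (Sum.inl i))) (a₂ := Sum.inr (Sum.inr (Sum.inr j))) h
    simp at this
  -- adjacency facts
  have hAdjx : ∀ w, G.Adj x w ↔ w ∈ ({y} ∪ Set.range xs ∪ Set.range us : Set V) := fun w => by
    rw [← hNx]; exact Iff.rfl
  have hAdjy : ∀ w, G.Adj y w ↔ w ∈ ({x} ∪ Set.range ys ∪ Set.range vs : Set V) := fun w => by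
    rw [← hNy]; exact Iff.rfl
  have hadj_x_xs : ∀ i, G.Adj x (xs i) := fun i => (hAdjx _).2 (Or.inl (Or.inr ⟨i, rfl⟩))
  have hadj_x_us : ∀ j, G.Adj x (us j) := fun j => (hAdjx _).2 (Or.inr ⟨j, rfl⟩)
  have hadj_y_ys : ∀ i, G.Adj y (ys i) := fun i => (hAdjy _).2 (Or.inl (Or.inr ⟨i, rfl⟩))
  have hadj_y_vs : ∀ j, G.Adj y (vs j) := fun j => (hAdjy _).2 (Or.inr ⟨j, rfl⟩)
  have hnadj_y_xs : ∀ i, ¬ G.Adj y (xs i) := by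
    intro i h
    rcases (hAdjy _).1 h with (h' | ⟨j, hj⟩) | ⟨j, hj⟩
    · exact hxs_x i h'
    · exact hxs_ys i j hj.symm
    · exact hxs_vs i j hj.symm
  have hnadj_x_ys : ∀ i, ¬ G.Adj x (ys i) := by
    intro i h
    rcases (hAdjx _).1 h with (h' | ⟨j, hj⟩) | ⟨j, hj⟩
    · exact hys_y i h'
    · exact hxs_ys j i hj
    · exact hus_ys j i hj
  -- distance facts
  have hreach : ∀ a b : V, G.Reachable a b := fun a b => hconn.preconnected a b
  have hdist1 : ∀ a b : V, a ≠ b → 1 ≤ G.dist a b := by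
    intro a b hab
    rcases Nat.eq_zero_or_pos (G.dist a b) with h | h
    · rcases SimpleGraph.dist_eq_zero_iff_eq_or_not_reachable.1 h with h' | h'
      · exact absurd h' hab
      · exact absurd (hreach a b) h'
    · exact h
  have hdistadj : ∀ {a b : V}, G.Adj a b → G.dist a b ≤ 1 := by
    intro a b h
    simpa using SimpleGraph.dist_le h.toWalk
  have hdist2 : ∀ a b : V, a ≠ b → ¬ G.Adj a b → 2 ≤ G.dist a b := by
    intro a b hab hnadj
    have h1 := hdist1 a b hab
    rcases Nat.lt_or_ge (G.dist a b) 2 with h | h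
    · have : G.dist a b = 1 := le_antisymm (by omega) h1
      exact absurd (SimpleGraph.dist_eq_one_iff_adj.1 this) hnadj
    · exact h
  -- Laplacian formulas
  have keyx : ∀ f : V → ℝ, nlap G f x = ((n : ℝ) + (ℓ : ℝ) + 1)⁻¹ *
      ((f y - f x) + (∑ i, (f (xs i) - f x)) + (∑ j, (f (us j) - f x))) :=
    nlap_formula G ℓ n x y xs us hNx hxs_inj hus_inj hxs_y hus_y hxs_us
  have keyy : ∀ f : V → ℝ, nlap G f y = ((n : ℝ) + (ℓ : ℝ) + 1)⁻¹ *
      ((f x - f y) + (∑ i, (f (ys i) - f y)) + (∑ j, (f (vs j) - f y))) :=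
    nlap_formula G ℓ n y x ys vs hNy hys_inj hvs_inj hys_x hvs_x hys_vs
  set D : ℝ := (n : ℝ) + (ℓ : ℝ) + 1 with hD
  have hDpos : (0 : ℝ) < D := by positivity
  set S : Set ℝ :=
    {r : ℝ | ∃ f : V → ℝ, GLip G f ∧ f y - f x = 1 ∧ r = nlap G f x - nlap G f y} with hS
  -- lower bound
  have hlb : ∀ r ∈ S, (2 - 2 * (ℓ : ℝ)) / D ≤ r := by
    rintro r ⟨f, hf, h1, hr⟩
    have hxterm : ∀ i : Fin ℓ, -(3 : ℝ) ≤ f (xs i) - f (ys i) := by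
      intro i
      have h := hf (xs i) (ys i)
      rw [hd1 i i] at h
      push_cast at h
      linarith [(abs_le.1 h).1]
    have huterm : ∀ j : Fin n, -(1 : ℝ) ≤ f (us j) - f (vs j) := by
      intro j
      have h := hf (us j) (vs j)
      have hd : (G.dist (us j) (vs j) : ℝ) ≤ 1 := by exact_mod_cast hdistadj (hd4 j)
      have := abs_le.1 (h.trans hd)
      linarith [this.1]
    rw [keyx f, keyy f] at hr
    have hE : (2 : ℝ) - 2 * ℓ ≤
        ((f y - f x) + (∑ i, (f (xs i) - f x)) + (∑ j, (f (us j) - f x)))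
        - ((f x - f y) + (∑ i, (f (ys i) - f y)) + (∑ j, (f (vs j) - f y))) := by
      have e1 : (∑ i, (f (xs i) - f x)) - (∑ i, (f (ys i) - f y))
          = ∑ i, ((f (xs i) - f (ys i)) + 1) := by
        rw [← Finset.sum_sub_distrib]
        refine Finset.sum_congr rfl fun i _ => by linarith
      have e2 : (∑ j, (f (us j) - f x)) - (∑ j, (f (vs j) - f y))
          = ∑ j, ((f (us j) - f (vs j)) + 1) := by
        rw [← Finset.sum_sub_distrib]
        refine Finset.sum_congr rfl fun j _ => by linarith
      have b1 : (ℓ : ℝ) * (-2) ≤ ∑ i, ((f (xs i) - f (ys i)) + 1) := by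
        calc (ℓ : ℝ) * (-2) = ∑ _i : Fin ℓ, (-2 : ℝ) := by
              rw [Finset.sum_const, Finset.card_univ, Fintype.card_fin, nsmul_eq_mul]
          _ ≤ ∑ i, ((f (xs i) - f (ys i)) + 1) :=
              Finset.sum_le_sum fun i _ => by linarith [hxterm i]
      have b2 : (0 : ℝ) ≤ ∑ j, ((f (us j) - f (vs j)) + 1) :=
        Finset.sum_nonneg fun j _ => by linarith [huterm j]
      have : ((f y - f x) + (∑ i, (f (xs i) - f x)) + (∑ j, (f (us j) - f x)))
          - ((f x - f y) + (∑ i, (f (ys i) - f y)) + (∑ j, (f (vs j) - f y)))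
          = 2 + ((∑ i, (f (xs i) - f x)) - (∑ i, (f (ys i) - f y)))
            + ((∑ j, (f (us j) - f x)) - (∑ j, (f (vs j) - f y))) := by linarith
      rw [this, e1, e2]
      linarith
    calc (2 - 2 * (ℓ : ℝ)) / D = D⁻¹ * (2 - 2 * (ℓ : ℝ)) := by rw [div_eq_mul_inv]; ring
      _ ≤ D⁻¹ * _ := mul_le_mul_of_nonneg_left hE (le_of_lt (inv_pos.2 hDpos))
      _ = r := by rw [hr]; ring
  -- the optimal function
  set T := Option (Fin ℓ ⊕ Fin n) with hT
  set p : T → V := fun t => t.elim x (Sum.elim xs us) with hp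
  set c : T → ℝ := fun t => t.elim 0 (Sum.elim (fun _ => -1) (fun _ => 0)) with hc
  have hTne : (Finset.univ : Finset T).Nonempty := ⟨none, Finset.mem_univ none⟩
  set f0 : V → ℝ := fun w => Finset.univ.inf' hTne (fun t => c t + (G.dist w (p t) : ℝ)) with hf0
  have hfle : ∀ (w : V) (t : T), f0 w ≤ c t + (G.dist w (p t) : ℝ) := fun w t =>
    Finset.inf'_le _ (Finset.mem_univ t)
  have hfkey : ∀ u v : V, f0 u - f0 v ≤ (G.dist u v : ℝ) := by
    intro u v
    obtain ⟨t, -, ht⟩ := Finset.exists_mem_eq_inf' hTne (fun t => c t + (G.dist v (p t) : ℝ))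
    have h1 := hfle u t
    have h2 : (G.dist u (p t) : ℝ) ≤ (G.dist u v : ℝ) + (G.dist v (p t) : ℝ) := by
      exact_mod_cast hconn.dist_triangle
    have h3 : f0 v = c t + (G.dist v (p t) : ℝ) := ht
    linarith
  have hflip : GLip G f0 := by
    intro u v
    rw [abs_sub_le_iff]
    refine ⟨hfkey u v, ?_⟩
    have := hfkey v u
    rwa [SimpleGraph.dist_comm] at this
  -- values of f0
  have hval : ∀ (w : V) (r : ℝ),
      (∀ t : T, r ≤ c t + (G.dist w (p t) : ℝ)) → (∃ t : T, c t + (G.dist w (p t) : ℝ) = r) →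
      f0 w = r := by
    intro w r hge ⟨t, htv⟩
    refine le_antisymm (htv ▸ hfle w t) (Finset.le_inf' _ _ fun t _ => hge t)
  have hfx : f0 x = 0 := by
    refine hval x 0 ?_ ⟨none, by simp [hc, hp]⟩
    rintro (_ | (i | j))
    · simp [hc, hp]
    · have := hdist1 x (xs i) (Ne.symm (hxs_x i))
      have : (1 : ℝ) ≤ G.dist x (xs i) := by exact_mod_cast this
      simp only [hc, hp, Option.elim, Sum.elim_inl]
      linarith
    · simp only [hc, hp, Option.elim, Sum.elim_inr]
      positivity
  have hfy : f0 y = 1 := by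
    refine hval y 1 ?_ ⟨none, ?_⟩
    · rintro (_ | (i | j))
      · have := hdist1 y x (Ne.symm hxy.ne)
        have : (1 : ℝ) ≤ G.dist y x := by exact_mod_cast this
        simp only [hc, hp, Option.elim]
        linarith
      · have := hdist2 y (xs i) (Ne.symm (hxs_y i)) (hnadj_y_xs i)
        have : (2 : ℝ) ≤ G.dist y (xs i) := by exact_mod_cast this
        simp only [hc, hp, Option.elim, Sum.elim_inl]
        linarith
      · have := hdist1 y (us j) (Ne.symm (hus_y j))
        have : (1 : ℝ) ≤ G.dist y (us j) := by exact_mod_cast this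
        simp only [hc, hp, Option.elim, Sum.elim_inr]
        linarith
    · have h1 : G.dist y x = 1 := SimpleGraph.dist_eq_one_iff_adj.2 hxy.symm
      simp [hc, hp, h1]
  have hfxs : ∀ i, f0 (xs i) = -1 := by
    intro k
    refine hval (xs k) (-1) ?_ ⟨some (Sum.inl k), by simp [hc, hp, SimpleGraph.dist_self]⟩
    rintro (_ | (i | j))
    · simp only [hc, hp, Option.elim]
      have : (0 : ℝ) ≤ (G.dist (xs k) x : ℝ) := Nat.cast_nonneg _
      linarith
    · simp only [hc, hp, Option.elim, Sum.elim_inl]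
      have : (0 : ℝ) ≤ (G.dist (xs k) (xs i) : ℝ) := Nat.cast_nonneg _
      linarith
    · simp only [hc, hp, Option.elim, Sum.elim_inr]
      have : (0 : ℝ) ≤ (G.dist (xs k) (us j) : ℝ) := Nat.cast_nonneg _
      linarith
  have hfys : ∀ i, f0 (ys i) = 2 := by
    intro k
    have hk : G.dist (ys k) (xs k) = 3 := by rw [SimpleGraph.dist_comm]; exact hd1 k k
    refine hval (ys k) 2 ?_ ⟨some (Sum.inl k), by simp [hc, hp, hk]; ring⟩
    rintro (_ | (i | j))
    · have := hdist2 (ys k) x (hys_x k) (fun h => hnadj_x_ys k h.symm)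
      have : (2 : ℝ) ≤ G.dist (ys k) x := by exact_mod_cast this
      simp only [hc, hp, Option.elim]
      linarith
    · have hki : G.dist (ys k) (xs i) = 3 := by rw [SimpleGraph.dist_comm]; exact hd1 i k
      simp only [hc, hp, Option.elim, Sum.elim_inl, hki]
      norm_num
    · have hkj : G.dist (ys k) (us j) = 3 := hd3 k j
      simp only [hc, hp, Option.elim, Sum.elim_inr, hkj]
      norm_num
  have hfus : ∀ j, f0 (us j) = 0 := by
    intro k
    refine hval (us k) 0 ?_ ⟨some (Sum.inr k), by simp [hc, hp, SimpleGraph.dist_self]⟩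
    rintro (_ | (i | j))
    · simp only [hc, hp, Option.elim]
      positivity
    · have := hdist1 (us k) (xs i) (fun h => hxs_us i k h.symm)
      have : (1 : ℝ) ≤ G.dist (us k) (xs i) := by exact_mod_cast this
      simp only [hc, hp, Option.elim, Sum.elim_inl]
      linarith
    · simp only [hc, hp, Option.elim, Sum.elim_inr]
      positivity
  have hfvs : ∀ j, f0 (vs j) = 1 := by
    intro k
    have hk : G.dist (vs k) (us k) ≤ 1 := by
      rw [SimpleGraph.dist_comm]; exact hdistadj (hd4 k)
    have hk1 : G.dist (vs k) (us k) = 1 :=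
      le_antisymm hk (hdist1 _ _ (fun h => hus_vs k k h.symm))
    refine hval (vs k) 1 ?_ ⟨some (Sum.inr k), by simp [hc, hp, hk1]⟩
    rintro (_ | (i | j))
    · have := hdist1 (vs k) x (hvs_x k)
      have : (1 : ℝ) ≤ G.dist (vs k) x := by exact_mod_cast this
      simp only [hc, hp, Option.elim]
      linarith
    · have hki : G.dist (vs k) (xs i) = 3 := by rw [SimpleGraph.dist_comm]; exact hd2 i k
      simp only [hc, hp, Option.elim, Sum.elim_inl, hki]
      norm_num
    · have := hdist1 (vs k) (us j) (fun h => hus_vs j k h.symm)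
      have : (1 : ℝ) ≤ G.dist (vs k) (us j) := by exact_mod_cast this
      simp only [hc, hp, Option.elim, Sum.elim_inr]
      linarith
  -- membership of the target value
  have hmem : (2 - 2 * (ℓ : ℝ)) / D ∈ S := by
    refine ⟨f0, hflip, by rw [hfy, hfx]; norm_num, ?_⟩
    rw [keyx f0, keyy f0]
    simp only [hfx, hfy, hfxs, hfys, hfus, hfvs]
    rw [Finset.sum_const, Finset.sum_const, Finset.sum_const, Finset.sum_const,
      Finset.card_univ, Finset.card_univ, Fintype.card_fin, Fintype.card_fin]
    simp only [nsmul_eq_mul]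
    rw [div_eq_mul_inv]
    ring
  have : kappaLLY G x y = sInf S := rfl
  rw [this]
  exact le_antisymm (csInf_le ⟨_, hlb⟩ hmem) (le_csInf ⟨_, hmem⟩ hlb)
end

section
/- Let G = (V,E) be a connected locally finite simple graph with adjacent vertices x, y, and let ℓ, n ≥ 0. Suppose there are pairwise distinct vertices z, x₁,…,x_ℓ, u₁,…,u_n, y₁,…,y_ℓ, v₁,…,v_n, all distinct from x and y, such that the neighbours of x are exactly {y, z, x₁,…,x_ℓ, u₁,…,u_n} and the neighbours of y are exactly {x, z, y₁,…,y_ℓ, v₁,…,v_n}. Assume (i) d(xᵢ, yⱼ) = 3 for all i,j ∈ {1,…,ℓ}; (ii) d(xᵢ, vⱼ) = 3 and d(yᵢ, uⱼ) = 3 for all i ∈ {1,…,ℓ}, j ∈ {1,…,n}; (iii) uⱼ ∼ vⱼ for all j ∈ {1,…,n}. Then the Lin–Lu–Yau Ollivier Ricci curvature of the edge {x,y} with respect to the normalized Laplacian satisfies κ_LLY(x,y) = (3 − 2ℓ)/(n + ℓ + 2). -/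
set_option linter.unusedVariables false

attribute [local instance] Classical.propDecidable

lemma nlap_eq {V : Type*} (G : SimpleGraph V) (a b c : V) {m k : ℕ}
    (ps : Fin m → V) (qs : Fin k → V)
    (hbc : b ≠ c)
    (hps : Function.Injective ps) (hqs : Function.Injective qs)
    (hbp : ∀ i, ps i ≠ b) (hbq : ∀ i, qs i ≠ b)
    (hcp : ∀ i, ps i ≠ c) (hcq : ∀ i, qs i ≠ c)
    (hpq : ∀ i j, ps i ≠ qs j)
    (hN : G.neighborSet a = {b} ∪ {c} ∪ Set.range ps ∪ Set.range qs)
    (f : V → ℝ) :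
    nlap G f a = ((m : ℝ) + (k : ℝ) + 2)⁻¹ *
      ((f b - f a) + (f c - f a) + (∑ i, (f (ps i) - f a)) + (∑ j, (f (qs j) - f a))) := by
  classical
  set F : Finset V :=
    insert b (insert c (Finset.image ps Finset.univ ∪ Finset.image qs Finset.univ)) with hF
  have hset : G.neighborSet a = ↑F := by
    rw [hN]
    ext w
    simp only [hF, Finset.coe_insert, Set.mem_insert_iff, Finset.coe_union,
      Finset.coe_image, Finset.coe_univ, Set.image_univ, Set.mem_union, Set.mem_range,
      Set.mem_singleton_iff]
    tauto
  have hdisj : Disjoint (Finset.image ps Finset.univ) (Finset.image qs Finset.univ) := by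
    rw [Finset.disjoint_left]
    intro w hw hw'
    simp only [Finset.mem_image, Finset.mem_univ, true_and] at hw hw'
    obtain ⟨i, rfl⟩ := hw
    obtain ⟨j, hj⟩ := hw'
    exact hpq i j hj.symm
  have hbmem : b ∉ insert c (Finset.image ps Finset.univ ∪ Finset.image qs Finset.univ) := by
    simp only [Finset.mem_insert, Finset.mem_union, Finset.mem_image, Finset.mem_univ, true_and,
      not_or]
    exact ⟨hbc, by rintro ⟨i, hi⟩; exact hbp i hi, by rintro ⟨i, hi⟩; exact hbq i hi⟩
  have hcmem : c ∉ Finset.image ps Finset.univ ∪ Finset.image qs Finset.univ := by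
    simp only [Finset.mem_union, Finset.mem_image, Finset.mem_univ, true_and, not_or]
    exact ⟨by rintro ⟨i, hi⟩; exact hcp i hi, by rintro ⟨i, hi⟩; exact hcq i hi⟩
  have hcard : F.card = m + k + 2 := by
    rw [hF, Finset.card_insert_of_notMem hbmem, Finset.card_insert_of_notMem hcmem,
      Finset.card_union_of_disjoint hdisj, Finset.card_image_of_injective _ hps,
      Finset.card_image_of_injective _ hqs]
    simp only [Finset.card_univ, Fintype.card_fin]
  have hNcard : ((Nat.card (G.neighborSet a) : ℝ)) = (m : ℝ) + (k : ℝ) + 2 := by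
    rw [hset, Nat.card_coe_set_eq, Set.ncard_coe_finset, hcard]
    push_cast
    ring
  have hsupp : (Function.support fun w => if G.Adj a w then f w - f a else 0) ⊆ ↑F := by
    intro w hw
    rw [Function.mem_support] at hw
    by_contra hwF
    apply hw
    rw [if_neg]
    intro hadj
    exact hwF (by rw [← hset]; exact hadj)
  have hsum : (∑ᶠ w, if G.Adj a w then f w - f a else 0) = ∑ w ∈ F, (f w - f a) := by
    rw [finsum_eq_sum_of_support_subset _ hsupp]
    refine Finset.sum_congr rfl fun w hwF => ?_
    rw [if_pos]
    have : w ∈ G.neighborSet a := by rw [hset]; exact_mod_cast hwF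
    exact this
  rw [nlap, hsum, hNcard, hF, Finset.sum_insert hbmem, Finset.sum_insert hcmem,
    Finset.sum_union hdisj, Finset.sum_image (fun i _ j _ h => hps h),
    Finset.sum_image (fun i _ j _ h => hqs h)]
  ring

noncomputable def supf {V : Type*} {ι : Type*} [Fintype ι] [Nonempty ι]
    (G : SimpleGraph V) (p : ι → V) (c : ι → ℝ) (w : V) : ℝ :=
  Finset.univ.sup' Finset.univ_nonempty (fun i => c i - (G.dist w (p i) : ℝ))

lemma supf_step {V : Type*} {ι : Type*} [Fintype ι] [Nonempty ι]
    (G : SimpleGraph V) (hconn : G.Connected) (p : ι → V) (c : ι → ℝ) (u v : V) :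
    supf G p c u - supf G p c v ≤ (G.dist u v : ℝ) := by
  rw [sub_le_iff_le_add, supf]
  apply Finset.sup'_le
  intro i _
  have htri : (G.dist v (p i) : ℝ) ≤ (G.dist v u : ℝ) + (G.dist u (p i) : ℝ) := by
    exact_mod_cast hconn.dist_triangle
  have hle : c i - (G.dist v (p i) : ℝ) ≤ supf G p c v :=
    Finset.le_sup' (fun j => c j - (G.dist v (p j) : ℝ)) (Finset.mem_univ i)
  have hcomm : (G.dist v u : ℝ) = (G.dist u v : ℝ) := by
    rw [SimpleGraph.dist_comm]
  linarith

lemma supf_lip {V : Type*} {ι : Type*} [Fintype ι] [Nonempty ι]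
    (G : SimpleGraph V) (hconn : G.Connected) (p : ι → V) (c : ι → ℝ) :
    GLip G (supf G p c) := by
  intro u v
  rw [abs_sub_le_iff]
  refine ⟨supf_step G hconn p c u v, ?_⟩
  have := supf_step G hconn p c v u
  have hcomm : (G.dist v u : ℝ) = (G.dist u v : ℝ) := by
    rw [SimpleGraph.dist_comm]
  linarith

lemma supf_val {V : Type*} {ι : Type*} [Fintype ι] [Nonempty ι]
    (G : SimpleGraph V) (p : ι → V) (c : ι → ℝ)
    (hkey : ∀ i j, c j - c i ≤ (G.dist (p i) (p j) : ℝ)) (i : ι) :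
    supf G p c (p i) = c i := by
  apply le_antisymm
  · apply Finset.sup'_le
    intro j _
    have := hkey i j
    linarith
  · have h := Finset.le_sup' (f := fun j => c j - (G.dist (p i) (p j) : ℝ))
      (Finset.mem_univ i)
    rw [supf]
    refine le_trans ?_ h
    simp

/-- The index type for the Kantorovich potential. -/
def pFun {V : Type*} (x y : V) {ℓ n : ℕ} (xs ys : Fin ℓ → V) (us vs : Fin n → V) :
    Unit ⊕ Unit ⊕ Fin ℓ ⊕ Fin ℓ ⊕ Fin n ⊕ Fin n → V :=
  Sum.elim (fun _ => x) (Sum.elim (fun _ => y)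
    (Sum.elim xs (Sum.elim ys (Sum.elim us vs))))

noncomputable def cFun (ℓ n : ℕ) : Unit ⊕ Unit ⊕ Fin ℓ ⊕ Fin ℓ ⊕ Fin n ⊕ Fin n → ℝ :=
  Sum.elim (fun _ => 0) (Sum.elim (fun _ => 1)
    (Sum.elim (fun _ => -1) (Sum.elim (fun _ => 2) (Sum.elim (fun _ => 0) fun _ => 1))))

/-- **Ollivier Ricci curvature from the local structure of an edge (with a common triangle).**
If the neighbourhoods of the adjacent vertices `x`, `y` are as in Figure 1 of the paper
(with a common neighbour `z`), then `κ_LLY(x,y) = (3 - 2ℓ)/(n + ℓ + 2)`. -/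
theorem kappa_of_local_structure_triangle {V : Type*} (G : SimpleGraph V)
    (hconn : G.Connected) (hlf : G.LocallyFinite)
    (x y : V) (hxy : G.Adj x y) (z : V) (ℓ n : ℕ)
    (xs : Fin ℓ → V) (us : Fin n → V) (ys : Fin ℓ → V) (vs : Fin n → V)
    (hinj : Function.Injective (Sum.elim xs (Sum.elim us (Sum.elim ys vs))))
    (hnex : ∀ p, Sum.elim xs (Sum.elim us (Sum.elim ys vs)) p ≠ x)
    (hney : ∀ p, Sum.elim xs (Sum.elim us (Sum.elim ys vs)) p ≠ y)
    (hnez : ∀ p, Sum.elim xs (Sum.elim us (Sum.elim ys vs)) p ≠ z)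
    (hzx : z ≠ x) (hzy : z ≠ y)
    (hNx : G.neighborSet x = {y} ∪ {z} ∪ Set.range xs ∪ Set.range us)
    (hNy : G.neighborSet y = {x} ∪ {z} ∪ Set.range ys ∪ Set.range vs)
    (hd1 : ∀ i j, G.dist (xs i) (ys j) = 3)
    (hd2 : ∀ i j, G.dist (xs i) (vs j) = 3)
    (hd3 : ∀ i j, G.dist (ys i) (us j) = 3)
    (hd4 : ∀ j, G.Adj (us j) (vs j)) :
    kappaLLY G x y = (3 - 2 * (ℓ : ℝ)) / ((n : ℝ) + (ℓ : ℝ) + 2) := by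
  classical
  -- distinctness facts
  have hne : ∀ p q : Fin ℓ ⊕ (Fin n ⊕ (Fin ℓ ⊕ Fin n)), p ≠ q →
      Sum.elim xs (Sum.elim us (Sum.elim ys vs)) p ≠
        Sum.elim xs (Sum.elim us (Sum.elim ys vs)) q :=
    fun p q h e => h (hinj e)
  have hxs_us : ∀ i j, xs i ≠ us j := fun i j =>
    hne (Sum.inl i) (Sum.inr (Sum.inl j)) (by simp)
  have hxs_ys : ∀ i j, xs i ≠ ys j := fun i j =>
    hne (Sum.inl i) (Sum.inr (Sum.inr (Sum.inl j))) (by simp)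
  have hxs_vs : ∀ i j, xs i ≠ vs j := fun i j =>
    hne (Sum.inl i) (Sum.inr (Sum.inr (Sum.inr j))) (by simp)
  have hus_ys : ∀ i j, us i ≠ ys j := fun i j =>
    hne (Sum.inr (Sum.inl i)) (Sum.inr (Sum.inr (Sum.inl j))) (by simp)
  have hus_vs : ∀ i j, us i ≠ vs j := fun i j =>
    hne (Sum.inr (Sum.inl i)) (Sum.inr (Sum.inr (Sum.inr j))) (by simp)
  have hys_vs : ∀ i j, ys i ≠ vs j := fun i j =>
    hne (Sum.inr (Sum.inr (Sum.inl i))) (Sum.inr (Sum.inr (Sum.inr j))) (by simp)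
  have hxs_x : ∀ i, xs i ≠ x := fun i => hnex (Sum.inl i)
  have hxs_y : ∀ i, xs i ≠ y := fun i => hney (Sum.inl i)
  have hxs_z : ∀ i, xs i ≠ z := fun i => hnez (Sum.inl i)
  have hus_x : ∀ i, us i ≠ x := fun i => hnex (Sum.inr (Sum.inl i))
  have hus_y : ∀ i, us i ≠ y := fun i => hney (Sum.inr (Sum.inl i))
  have hus_z : ∀ i, us i ≠ z := fun i => hnez (Sum.inr (Sum.inl i))
  have hys_x : ∀ i, ys i ≠ x := fun i => hnex (Sum.inr (Sum.inr (Sum.inl i)))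
  have hys_y : ∀ i, ys i ≠ y := fun i => hney (Sum.inr (Sum.inr (Sum.inl i)))
  have hys_z : ∀ i, ys i ≠ z := fun i => hnez (Sum.inr (Sum.inr (Sum.inl i)))
  have hvs_x : ∀ i, vs i ≠ x := fun i => hnex (Sum.inr (Sum.inr (Sum.inr i)))
  have hvs_y : ∀ i, vs i ≠ y := fun i => hney (Sum.inr (Sum.inr (Sum.inr i)))
  have hvs_z : ∀ i, vs i ≠ z := fun i => hnez (Sum.inr (Sum.inr (Sum.inr i)))
  have hxsinj : Function.Injective xs := fun i j h => by
    have := hinj (a₁ := Sum.inl i) (a₂ := Sum.inl j) h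
    simpa using this
  have husinj : Function.Injective us := fun i j h => by
    have := hinj (a₁ := Sum.inr (Sum.inl i)) (a₂ := Sum.inr (Sum.inl j)) h
    simpa using this
  have hysinj : Function.Injective ys := fun i j h => by
    have := hinj (a₁ := Sum.inr (Sum.inr (Sum.inl i)))
      (a₂ := Sum.inr (Sum.inr (Sum.inl j))) h
    simpa using this
  have hvsinj : Function.Injective vs := fun i j h => by
    have := hinj (a₁ := Sum.inr (Sum.inr (Sum.inr i)))
      (a₂ := Sum.inr (Sum.inr (Sum.inr j))) h
    simpa using this
  -- the common representation of the nlap difference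
  have hrepr : ∀ f : V → ℝ, f y - f x = 1 →
      nlap G f x - nlap G f y
        = ((n : ℝ) + (ℓ : ℝ) + 2)⁻¹ * ((3 + (ℓ : ℝ) + (n : ℝ))
            + ((∑ i, (f (xs i) - f (ys i))) + (∑ j, (f (us j) - f (vs j))))) := by
    intro f hf1
    rw [nlap_eq G x y z xs us (Ne.symm hzy) hxsinj husinj hxs_y hus_y hxs_z hus_z
        hxs_us hNx f,
      nlap_eq G y x z ys vs (Ne.symm hzx) hysinj hvsinj hys_x hvs_x hys_z hvs_z
        hys_vs hNy f]
    have e1 : ∀ (m : ℕ) (g : Fin m → ℝ) (a : ℝ),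
        (∑ i, (g i - a)) = (∑ i, g i) - (m : ℝ) * a := by
      intro m g a
      rw [Finset.sum_sub_distrib, Finset.sum_const, Finset.card_univ, Fintype.card_fin,
        nsmul_eq_mul]
    rw [e1, e1, e1, e1, Finset.sum_sub_distrib, Finset.sum_sub_distrib]
    have hfy : f y = f x + 1 := by linarith
    rw [hfy]
    ring
  have hnn : ∀ u v : V, (0 : ℝ) ≤ (G.dist u v : ℝ) := fun u v => Nat.cast_nonneg _
  have hge1 : ∀ u v : V, u ≠ v → (1 : ℝ) ≤ (G.dist u v : ℝ) := fun u v h => by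
    exact_mod_cast hconn.pos_dist_of_ne h
  -- distance ≥ 2 facts
  have hge2_x_ys : ∀ j, 2 ≤ G.dist x (ys j) := by
    intro j
    have h0 : G.dist x (ys j) ≠ 0 := fun e =>
      hys_x j (hconn.dist_eq_zero_iff.mp e).symm
    have h1 : G.dist x (ys j) ≠ 1 := by
      intro e
      have hadj := SimpleGraph.dist_eq_one_iff_adj.mp e
      have hmem : ys j ∈ G.neighborSet x := hadj
      rw [hNx] at hmem
      simp only [Set.mem_union, Set.mem_singleton_iff, Set.mem_range] at hmem
      rcases hmem with (((h | h) | ⟨i, h⟩) | ⟨i, h⟩)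
      · exact hys_y j h
      · exact hys_z j h
      · exact hxs_ys i j h
      · exact hus_ys i j h
    omega
  have hge2_y_xs : ∀ i, 2 ≤ G.dist y (xs i) := by
    intro i
    have h0 : G.dist y (xs i) ≠ 0 := fun e =>
      hxs_y i (hconn.dist_eq_zero_iff.mp e).symm
    have h1 : G.dist y (xs i) ≠ 1 := by
      intro e
      have hadj := SimpleGraph.dist_eq_one_iff_adj.mp e
      have hmem : xs i ∈ G.neighborSet y := hadj
      rw [hNy] at hmem
      simp only [Set.mem_union, Set.mem_singleton_iff, Set.mem_range] at hmem
      rcases hmem with (((h | h) | ⟨j, h⟩) | ⟨j, h⟩)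
      · exact hxs_x i h
      · exact hxs_z i h
      · exact hxs_ys i j h.symm
      · exact hxs_vs i j h.symm
    omega
  -- the optimal potential
  have hkey : ∀ i j, cFun ℓ n j - cFun ℓ n i
      ≤ (G.dist (pFun x y xs ys us vs i) (pFun x y xs ys us vs j) : ℝ) := by
    rintro (⟨⟩ | ⟨⟩ | i | i | i | i) (⟨⟩ | ⟨⟩ | j | j | j | j) <;>
      simp only [pFun, cFun, Sum.elim_inl, Sum.elim_inr] <;>
      try { refine le_trans ?_ (hnn _ _); norm_num }
    · -- x, y : diff 1
      have := hge1 x y hxy.ne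
      linarith
    · -- x, ys j : diff 2
      have h2 : (2 : ℝ) ≤ G.dist x (ys j) := by exact_mod_cast hge2_x_ys j
      linarith
    · -- x, vs j : diff 1
      have := hge1 x (vs j) (fun e => hvs_x j e.symm)
      linarith
    · -- y, ys j : diff 1
      have := hge1 y (ys j) (fun e => hys_y j e.symm)
      linarith
    · -- xs i, x : diff 1
      have := hge1 (xs i) x (hxs_x i)
      linarith
    · -- xs i, y : diff 2
      have h2 : (2 : ℝ) ≤ G.dist (xs i) y := by
        rw [SimpleGraph.dist_comm]
        exact_mod_cast hge2_y_xs i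
      linarith
    · -- xs i, ys j : diff 3
      rw [hd1 i j]
      norm_num
    · -- xs i, us j : diff 1
      have := hge1 (xs i) (us j) (hxs_us i j)
      linarith
    · -- xs i, vs j : diff 2
      rw [hd2 i j]
      norm_num
    · -- us i, y : diff 1
      have := hge1 (us i) y (hus_y i)
      linarith
    · -- us i, ys j : diff 2
      rw [SimpleGraph.dist_comm, hd3 j i]
      norm_num
    · -- us i, vs j : diff 1
      have := hge1 (us i) (vs j) (hus_vs i j)
      linarith
    · -- vs i, ys j : diff 1
      have := hge1 (vs i) (ys j) (fun e => hys_vs j i e.symm)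
      linarith
  set f : V → ℝ := supf G (pFun x y xs ys us vs) (cFun ℓ n) with hfdef
  have hflip : GLip G f := supf_lip G hconn _ _
  have hval := supf_val G (pFun x y xs ys us vs) (cFun ℓ n) hkey
  have hfx : f x = 0 := by simpa [hfdef, pFun, cFun] using hval (Sum.inl ())
  have hfy : f y = 1 := by simpa [hfdef, pFun, cFun] using hval (Sum.inr (Sum.inl ()))
  have hfxs : ∀ i, f (xs i) = -1 := fun i => by
    simpa [hfdef, pFun, cFun] using hval (Sum.inr (Sum.inr (Sum.inl i)))
  have hfys : ∀ i, f (ys i) = 2 := fun i => by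
    simpa [hfdef, pFun, cFun] using hval (Sum.inr (Sum.inr (Sum.inr (Sum.inl i))))
  have hfus : ∀ j, f (us j) = 0 := fun j => by
    simpa [hfdef, pFun, cFun] using hval (Sum.inr (Sum.inr (Sum.inr (Sum.inr (Sum.inl j)))))
  have hfvs : ∀ j, f (vs j) = 1 := fun j => by
    simpa [hfdef, pFun, cFun] using hval (Sum.inr (Sum.inr (Sum.inr (Sum.inr (Sum.inr j)))))
  have hf1 : f y - f x = 1 := by rw [hfx, hfy]; ring
  have hmemval : nlap G f x - nlap G f y = (3 - 2 * (ℓ : ℝ)) / ((n : ℝ) + (ℓ : ℝ) + 2) := by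
    rw [hrepr f hf1]
    have hs1 : (∑ i, (f (xs i) - f (ys i))) = (ℓ : ℝ) * (-3) := by
      have h : ∀ i, f (xs i) - f (ys i) = -3 := fun i => by rw [hfxs i, hfys i]; norm_num
      rw [Finset.sum_congr rfl fun i _ => h i, Finset.sum_const, Finset.card_univ,
        Fintype.card_fin, nsmul_eq_mul]
    have hs2 : (∑ j, (f (us j) - f (vs j))) = (n : ℝ) * (-1) := by
      have h : ∀ j, f (us j) - f (vs j) = -1 := fun j => by rw [hfus j, hfvs j]; norm_num
      rw [Finset.sum_congr rfl fun j _ => h j, Finset.sum_const, Finset.card_univ,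
        Fintype.card_fin, nsmul_eq_mul]
    rw [hs1, hs2, div_eq_inv_mul]
    ring
  set S : Set ℝ :=
    {r : ℝ | ∃ f : V → ℝ, GLip G f ∧ f y - f x = 1 ∧ r = nlap G f x - nlap G f y} with hS
  have hmem : (3 - 2 * (ℓ : ℝ)) / ((n : ℝ) + (ℓ : ℝ) + 2) ∈ S :=
    ⟨f, hflip, hf1, hmemval.symm⟩
  have hlow : ∀ r ∈ S, (3 - 2 * (ℓ : ℝ)) / ((n : ℝ) + (ℓ : ℝ) + 2) ≤ r := by
    rintro r ⟨g, hg, hg1, rfl⟩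
    rw [hrepr g hg1, div_eq_inv_mul]
    have hDinv : (0 : ℝ) ≤ ((n : ℝ) + (ℓ : ℝ) + 2)⁻¹ := by positivity
    refine mul_le_mul_of_nonneg_left ?_ hDinv
    have hs1 : (ℓ : ℝ) * (-3) ≤ ∑ i, (g (xs i) - g (ys i)) := by
      have hterm : ∀ i : Fin ℓ, (-3 : ℝ) ≤ g (xs i) - g (ys i) := by
        intro i
        have h := hg (xs i) (ys i)
        rw [hd1 i i] at h
        have h3 : |g (xs i) - g (ys i)| ≤ 3 := by exact_mod_cast h
        linarith [(abs_le.mp h3).1]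
      calc (ℓ : ℝ) * (-3) = ∑ _i : Fin ℓ, (-3 : ℝ) := by
            rw [Finset.sum_const, Finset.card_univ, Fintype.card_fin, nsmul_eq_mul]
        _ ≤ _ := Finset.sum_le_sum fun i _ => hterm i
    have hs2 : (n : ℝ) * (-1) ≤ ∑ j, (g (us j) - g (vs j)) := by
      have hterm : ∀ j : Fin n, (-1 : ℝ) ≤ g (us j) - g (vs j) := by
        intro j
        have h := hg (us j) (vs j)
        rw [SimpleGraph.dist_eq_one_iff_adj.mpr (hd4 j)] at h
        have h3 : |g (us j) - g (vs j)| ≤ 1 := by exact_mod_cast h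
        linarith [(abs_le.mp h3).1]
      calc (n : ℝ) * (-1) = ∑ _j : Fin n, (-1 : ℝ) := by
            rw [Finset.sum_const, Finset.card_univ, Fintype.card_fin, nsmul_eq_mul]
        _ ≤ _ := Finset.sum_le_sum fun j _ => hterm j
    linarith
  rw [kappaLLY, ← hS]
  exact le_antisymm (csInf_le ⟨_, fun r hr => hlow r hr⟩ hmem) (le_csInf ⟨_, hmem⟩ hlow)
end
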